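/- arXiv:1612.02843 — 6 statements merged into one kernel-verified Lean document; each statement's English description precedes it below -/
import Mathlib

section
/- Let G be a finite connected graph of order n ≥ 2 and let r ≥ 1 be an integer. Then the strong resolving graph G_SR is isomorphic to the star K_{1,r} if and only if G is isomorphic to the path P_n and r = 1. -/
open SimpleGraph

variable {V : Type*}

/-- `u` is maximally distant from `v` in `G`: every neighbor `w` of `u`
satisfies `d(v,w) ≤ d(v,u)`. -/
def MaxDistant (G : SimpleGraph V) (u v : V) : Prop :=
  ∀ w, G.Adj u w → G.dist v w ≤ G.dist v u

/-- `u` and `v` are mutually maximally distant in `G`. -/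
def MMD (G : SimpleGraph V) (u v : V) : Prop :=
  MaxDistant G u v ∧ MaxDistant G v u

/-- The boundary of `G`: vertices maximally distant from some vertex. -/
def boundary (G : SimpleGraph V) : Set V := {u | ∃ v, MaxDistant G u v}

/-- The strong resolving graph on the whole vertex set (`G_{SR+I}`):
two vertices are adjacent iff they are distinct and mutually maximally distant. -/
def srGraphI (G : SimpleGraph V) : SimpleGraph V where
  Adj u v := u ≠ v ∧ MMD G u v
  symm := by
    constructor
    rintro u v ⟨hne, h1, h2⟩
    exact ⟨hne.symm, h2, h1⟩
  loopless := by
    constructor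
    rintro u ⟨hne, _⟩
    exact hne rfl

/-- The strong resolving graph `G_SR`, with vertex set the boundary of `G`. -/
def srGraph (G : SimpleGraph V) : SimpleGraph (boundary G) :=
  (srGraphI G).induce (boundary G)

/-- `u` and `v` are true twins: distinct vertices with equal closed neighborhoods. -/
def TrueTwins (G : SimpleGraph V) (u v : V) : Prop :=
  u ≠ v ∧ insert u (G.neighborSet u) = insert v (G.neighborSet v)

/-- `u` and `v` are false twins: distinct vertices with equal open neighborhoods. -/
def FalseTwins (G : SimpleGraph V) (u v : V) : Prop :=
  u ≠ v ∧ G.neighborSet u = G.neighborSet v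

/-- A vertex is simplicial if its neighborhood induces a complete graph. -/
def IsSimplicial (G : SimpleGraph V) (v : V) : Prop :=
  ∀ a b, G.Adj v a → G.Adj v b → a ≠ b → G.Adj a b

/-- `w` strongly resolves `u` and `v`. -/
def StronglyResolves (G : SimpleGraph V) (w u v : V) : Prop :=
  G.dist w u = G.dist w v + G.dist v u ∨ G.dist w v = G.dist w u + G.dist u v

/-- `S` is a strong metric generator for `G`. -/
def IsStrongMetricGenerator (G : SimpleGraph V) (S : Set V) : Prop :=
  ∀ u v : V, u ≠ v → ∃ w ∈ S, StronglyResolves G w u v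

/-- The strong metric dimension of `G`. -/
noncomputable def sdim (G : SimpleGraph V) : ℕ :=
  sInf {n | ∃ S : Set V, S.ncard = n ∧ IsStrongMetricGenerator G S}

/-- `S` is a vertex cover of `H`. -/
def IsVertexCover (H : SimpleGraph V) (S : Set V) : Prop :=
  ∀ u v : V, H.Adj u v → u ∈ S ∨ v ∈ S

/-- The vertex cover number of `H`. -/
noncomputable def vertexCoverNumber (H : SimpleGraph V) : ℕ :=
  sInf {n | ∃ S : Set V, S.ncard = n ∧ _root_.IsVertexCover H S}

/-- The graph `G*`: distinct vertices adjacent iff at distance at least two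
or true twins. -/
def GStar (G : SimpleGraph V) : SimpleGraph V where
  Adj u v := u ≠ v ∧ (2 ≤ G.dist u v ∨ TrueTwins G u v)
  symm := by
    constructor
    rintro u v ⟨hne, h | h⟩
    · exact ⟨hne.symm, Or.inl (by rwa [G.dist_comm])⟩
    · exact ⟨hne.symm, Or.inr ⟨h.1.symm, h.2.symm⟩⟩
  loopless := by
    constructor
    rintro u ⟨hne, _⟩
    exact hne rfl

/-- The direct (tensor) product of two graphs. -/
def DirectProd {α β : Type*} (G : SimpleGraph α) (H : SimpleGraph β) :
    SimpleGraph (α × β) where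
  Adj x y := G.Adj x.1 y.1 ∧ H.Adj x.2 y.2
  symm := ⟨fun _ _ h => ⟨h.1.symm, h.2.symm⟩⟩
  loopless := ⟨fun x h => G.loopless.irrefl x.1 h.1⟩

/-- The strong product of two graphs. -/
def StrongProd {α β : Type*} (G : SimpleGraph α) (H : SimpleGraph β) :
    SimpleGraph (α × β) where
  Adj x y := x ≠ y ∧ (x.1 = y.1 ∨ G.Adj x.1 y.1) ∧ (x.2 = y.2 ∨ H.Adj x.2 y.2)
  symm := by
    constructor
    rintro x y ⟨hne, h1, h2⟩
    exact ⟨hne.symm, h1.imp Eq.symm Adj.symm, h2.imp Eq.symm Adj.symm⟩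
  loopless := by
    constructor
    rintro x ⟨hne, _⟩
    exact hne rfl

/-- The Cartesian sum (disjunctive product) of two graphs. -/
def CartSum {α β : Type*} (G : SimpleGraph α) (H : SimpleGraph β) :
    SimpleGraph (α × β) where
  Adj x y := G.Adj x.1 y.1 ∨ H.Adj x.2 y.2
  symm := ⟨fun _ _ h => h.imp Adj.symm Adj.symm⟩
  loopless := ⟨fun x h => h.elim (G.loopless.irrefl x.1) (H.loopless.irrefl x.2)⟩

/-- The lexicographic product of two graphs. -/
def LexProd {α β : Type*} (G : SimpleGraph α) (H : SimpleGraph β) :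
    SimpleGraph (α × β) where
  Adj x y := G.Adj x.1 y.1 ∨ (x.1 = y.1 ∧ H.Adj x.2 y.2)
  symm := ⟨fun _ _ h => h.imp Adj.symm (fun h => ⟨h.1.symm, h.2.symm⟩)⟩
  loopless := ⟨fun x h => h.elim (G.loopless.irrefl x.1) (fun h => H.loopless.irrefl x.2 h.2)⟩

/-- The disjoint union of `n` copies of the complete graph on `m` vertices. -/
def CopiesComplete (n m : ℕ) : SimpleGraph (Fin n × Fin m) where
  Adj x y := x.1 = y.1 ∧ x.2 ≠ y.2
  symm := ⟨fun _ _ h => ⟨h.1.symm, h.2.symm⟩⟩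
  loopless := ⟨fun x h => h.2 rfl⟩

/-- Every pair of vertices lies on a common cycle of length five. -/
def C5Connected (G : SimpleGraph V) : Prop :=
  ∀ u v : V, ∃ (w : V) (c : G.Walk w w), c.IsCycle ∧ c.length = 5 ∧
    u ∈ c.support ∧ v ∈ c.support


section AuxLemmas
variable {G : SimpleGraph V}

lemma adj_dist_one {u v : V} (h : G.Adj u v) : G.dist u v = 1 :=
  dist_eq_one_iff_adj.mpr h

lemma my_dist_lt_card [Fintype V] (hG : G.Connected) (u v : V) :
    G.dist u v < Fintype.card V := by
  obtain ⟨p, hp, hl⟩ := hG.exists_path_of_dist u v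
  exact hl ▸ hp.length_lt

lemma exists_toward (hG : G.Connected) {u v : V} (h : u ≠ v) :
    ∃ w, G.Adj u w ∧ G.dist w v + 1 = G.dist u v := by
  obtain ⟨p, hl⟩ := hG.exists_walk_length_eq_dist u v
  cases p with
  | nil => exact absurd rfl h
  | cons hadj q =>
    rename_i w
    refine ⟨w, hadj, ?_⟩
    have h1 : G.dist w v ≤ q.length := dist_le q
    have h2 : G.dist u v ≤ G.dist u w + G.dist w v := hG.dist_triangle
    have h3 : G.dist u w ≤ 1 := (adj_dist_one hadj).le
    simp only [Walk.length_cons] at hl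
    omega

lemma exists_neighbor [Fintype V] (hG : G.Connected) (hn : 2 ≤ Fintype.card V) (v : V) :
    ∃ w, G.Adj v w := by
  obtain ⟨u, hu⟩ := Fintype.exists_ne_of_one_lt_card (by omega) v
  obtain ⟨w, hw, _⟩ := exists_toward hG hu.symm
  exact ⟨w, hw⟩

lemma mmd_ne [Fintype V] (hG : G.Connected) (hn : 2 ≤ Fintype.card V) {x y : V}
    (h : MMD G x y) : x ≠ y := by
  rintro rfl
  obtain ⟨w, hw⟩ := exists_neighbor hG hn x
  have h1 := h.1 w hw
  rw [dist_self, adj_dist_one hw] at h1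
  omega

lemma lemE [Fintype V] (hG : G.Connected) (v w : V) :
    ∃ x, MaxDistant G x v ∧ G.dist v x = G.dist v w + G.dist w x := by
  suffices h : ∀ k (w : V), Fintype.card V - G.dist v w ≤ k →
      ∃ x, MaxDistant G x v ∧ G.dist v x = G.dist v w + G.dist w x from
    h _ w le_rfl
  intro k
  induction k with
  | zero => intro w hk; exact absurd (my_dist_lt_card hG v w) (by omega)
  | succ k ih =>
    intro w hk
    by_cases hmd : MaxDistant G w v
    · exact ⟨w, hmd, by simp⟩
    · simp only [MaxDistant, not_forall] at hmd
      obtain ⟨w', hadj, hgt⟩ := hmd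
      have hgt' : G.dist v w < G.dist v w' := by omega
      have hub : G.dist v w' ≤ G.dist v w + 1 := by
        have := hG.dist_triangle (u := v) (v := w) (w := w')
        rw [adj_dist_one hadj] at this; exact this
      have heq : G.dist v w' = G.dist v w + 1 := by omega
      have hklt := my_dist_lt_card hG v w
      obtain ⟨x, hmax, heq2⟩ := ih w' (by omega)
      refine ⟨x, hmax, ?_⟩
      have t1 : G.dist w x ≤ 1 + G.dist w' x := by
        have := hG.dist_triangle (u := w) (v := w') (w := x)
        rw [adj_dist_one hadj] at this; exact this
      have t2 : G.dist v x ≤ G.dist v w + G.dist w x := hG.dist_triangle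
      omega

lemma lemMMD [Fintype V] (hG : G.Connected) {x v : V} (hxv : MaxDistant G x v) :
    ∃ y, MMD G x y ∧ G.dist x y = G.dist x v + G.dist v y := by
  obtain ⟨y, hymax, heq⟩ := lemE hG x v
  refine ⟨y, ⟨?_, hymax⟩, heq⟩
  intro x' hx'
  have t1 : G.dist y x' ≤ G.dist y v + G.dist v x' := hG.dist_triangle
  have t2 : G.dist v x' ≤ G.dist v x := hxv x' hx'
  have t3 : G.dist y v = G.dist v y := dist_comm ..
  have t4 : G.dist y x = G.dist x y := dist_comm ..
  have t6 : G.dist v x = G.dist x v := dist_comm ..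
  have t5 : G.dist y x' ≤ G.dist y x := by rw [t4, heq]; omega
  exact t5

lemma claim1 [Fintype V] (hG : G.Connected) (v : V) :
    ∃ x y, MMD G x y ∧ G.dist x y = G.dist x v + G.dist v y := by
  obtain ⟨x, hmax, _⟩ := lemE hG v v
  obtain ⟨y, hmmd, heq⟩ := lemMMD hG hmax
  exact ⟨x, y, hmmd, heq⟩

lemma edge_lemma [Fintype V] (hG : G.Connected) {u v : V} (hadj : G.Adj u v) :
    ∃ x y, MMD G x y ∧ G.dist v x = G.dist u x + 1 := by
  obtain ⟨x, hmax, heq⟩ := lemE hG v u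
  obtain ⟨y, hmmd, _⟩ := lemMMD hG hmax
  refine ⟨x, y, hmmd, ?_⟩
  rw [adj_dist_one hadj.symm] at heq
  rw [heq, Nat.add_comm]

end AuxLemmas

section PathAux

lemma pathGraph_walk_lb {n : ℕ} {i j : Fin n} (p : (pathGraph n).Walk i j) :
    j.val - i.val ≤ p.length ∧ i.val - j.val ≤ p.length := by
  induction p with
  | nil => simp
  | cons hadj q ih =>
    rename_i a b c
    rw [pathGraph_adj] at hadj
    simp only [Walk.length_cons]
    omega

lemma pathGraph_conn {n : ℕ} (i : Fin n) : (pathGraph n).Connected := by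
  obtain ⟨m, rfl⟩ : ∃ m, n = m + 1 := ⟨n - 1, by have := i.pos; omega⟩
  exact pathGraph_connected m

lemma pathGraph_dist_le {n : ℕ} : ∀ (k : ℕ) (i j : Fin n), j.val = i.val + k →
    (pathGraph n).dist i j ≤ k := by
  intro k
  induction k with
  | zero =>
    intro i j h
    have : i = j := Fin.ext (by omega)
    simp [this]
  | succ k ih =>
    intro i j h
    have hi1 : i.val + 1 < n := by have := j.isLt; omega
    set i' : Fin n := ⟨i.val + 1, hi1⟩ with hi'
    have hadj : (pathGraph n).Adj i i' := pathGraph_adj.mpr (Or.inl rfl)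
    have h1 : (pathGraph n).dist i' j ≤ k := ih i' j (by simp [hi']; omega)
    have h2 : (pathGraph n).dist i j ≤ (pathGraph n).dist i i' + (pathGraph n).dist i' j :=
      (pathGraph_conn i).dist_triangle
    have h3 : (pathGraph n).dist i i' = 1 := dist_eq_one_iff_adj.mpr hadj
    omega

lemma pathGraph_dist {n : ℕ} (i j : Fin n) :
    (pathGraph n).dist i j = (j.val - i.val) + (i.val - j.val) := by
  refine le_antisymm ?_ ?_
  · rcases le_total i.val j.val with h | h
    · have := pathGraph_dist_le (j.val - i.val) i j (by omega)
      omega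
    · have := pathGraph_dist_le (i.val - j.val) j i (by omega)
      rw [dist_comm] at this
      omega
  · obtain ⟨p, hl⟩ := (pathGraph_conn i).exists_walk_length_eq_dist i j
    have := pathGraph_walk_lb p
    omega

end PathAux

section IsoAux
variable {W : Type*} {G : SimpleGraph V} {H : SimpleGraph W}

lemma iso_dist_le (φ : G ≃g H) (u v : V) : H.dist (φ u) (φ v) ≤ G.dist u v := by
  by_cases hr : G.Reachable u v
  · obtain ⟨p, hl⟩ := hr.exists_walk_length_eq_dist
    calc H.dist (φ u) (φ v) ≤ (p.map φ.toHom).length := dist_le _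
    _ = p.length := Walk.length_map _ _
    _ = G.dist u v := hl
  · rw [dist_eq_zero_of_not_reachable hr]
    rw [dist_eq_zero_of_not_reachable]
    intro hc
    exact hr (by simpa using hc.map φ.symm.toHom)

lemma iso_dist_eq (φ : G ≃g H) (u v : V) : H.dist (φ u) (φ v) = G.dist u v := by
  refine le_antisymm (iso_dist_le φ u v) ?_
  have := iso_dist_le φ.symm (φ u) (φ v)
  simpa using this

lemma maxDistant_iso (φ : G ≃g H) (u v : V) :
    MaxDistant H (φ u) (φ v) ↔ MaxDistant G u v := by
  constructor
  · intro h w hw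
    have hH := h (φ w) (φ.map_rel_iff.mpr hw)
    rwa [iso_dist_eq, iso_dist_eq] at hH
  · intro h w hw
    have hw' : w = φ (φ.symm w) := (φ.apply_symm_apply w).symm
    rw [hw'] at hw ⊢
    rw [iso_dist_eq, iso_dist_eq]
    exact h _ (φ.map_rel_iff.mp hw)

end IsoAux

section PathBoundary

lemma path_md_01 {n : ℕ} (hn : 2 ≤ n) :
    MaxDistant (pathGraph n) ⟨0, by omega⟩ ⟨n - 1, by omega⟩ := by
  intro w hw
  rw [pathGraph_adj] at hw
  rw [pathGraph_dist, pathGraph_dist]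
  simp only [Fin.val_mk] at hw ⊢
  omega

lemma path_md_10 {n : ℕ} (hn : 2 ≤ n) :
    MaxDistant (pathGraph n) ⟨n - 1, by omega⟩ ⟨0, by omega⟩ := by
  intro w hw
  rw [pathGraph_adj] at hw
  rw [pathGraph_dist, pathGraph_dist]
  simp only [Fin.val_mk] at hw ⊢
  have := w.isLt
  omega

lemma path_not_boundary {n : ℕ} {u : Fin n} (h0 : 0 < u.val) (h1 : u.val < n - 1)
    (v : Fin n) : ¬ MaxDistant (pathGraph n) u v := by
  intro h
  rcases le_total v.val u.val with hv | hv
  · have hadj : (pathGraph n).Adj u ⟨u.val + 1, by omega⟩ :=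
      pathGraph_adj.mpr (Or.inl rfl)
    have := h _ hadj
    rw [pathGraph_dist, pathGraph_dist] at this
    simp only [Fin.val_mk] at this
    omega
  · have hadj : (pathGraph n).Adj u ⟨u.val - 1, by omega⟩ :=
      pathGraph_adj.mpr (Or.inr (by simp only [Fin.val_mk]; omega))
    have := h _ hadj
    rw [pathGraph_dist, pathGraph_dist] at this
    simp only [Fin.val_mk] at this
    omega

end PathBoundary

lemma srGraph_adj (G : SimpleGraph V) (p q : boundary G) :
    (srGraph G).Adj p q ↔ (p.val ≠ q.val ∧ MMD G p.val q.val) := Iff.rfl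

lemma stmt7_backward [Fintype V] (G : SimpleGraph V) (hG : G.Connected)
    (hn : 2 ≤ Fintype.card V) (φ : G ≃g pathGraph (Fintype.card V)) :
    Nonempty (srGraph G ≃g completeBipartiteGraph (Fin 1) (Fin 1)) := by
  classical
  set n := Fintype.card V with hnn
  let z0 : Fin n := ⟨0, by omega⟩
  let z1 : Fin n := ⟨n - 1, by omega⟩
  set a := φ.symm z0 with haa
  set b := φ.symm z1 with hbb
  have hfa : φ a = z0 := φ.apply_symm_apply z0
  have hfb : φ b = z1 := φ.apply_symm_apply z1
  have hmab : MaxDistant G a b :=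
    (maxDistant_iso φ a b).mp (by rw [hfa, hfb]; exact path_md_01 hn)
  have hmba : MaxDistant G b a :=
    (maxDistant_iso φ b a).mp (by rw [hfa, hfb]; exact path_md_10 hn)
  have ha : a ∈ boundary G := ⟨b, hmab⟩
  have hb : b ∈ boundary G := ⟨a, hmba⟩
  have hne : a ≠ b := by
    intro h
    have : z0 = z1 := by rw [← hfa, ← hfb, h]
    have := congrArg Fin.val this
    simp only [Fin.val_mk, z0, z1] at this
    omega
  have key0 : ∀ u : V, (φ u).val = 0 → u = a := by
    intro u h
    exact φ.injective (by rw [hfa]; exact Fin.ext h)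
  have key1 : ∀ u : V, (φ u).val = n - 1 → u = b := by
    intro u h
    exact φ.injective (by rw [hfb]; exact Fin.ext h)
  have hbd : ∀ u : V, u ∈ boundary G → u = a ∨ u = b := by
    rintro u ⟨v, hmax⟩
    have h' : MaxDistant (pathGraph n) (φ u) (φ v) := (maxDistant_iso φ u v).mpr hmax
    by_contra hc
    push_neg at hc
    have h0 : (φ u).val ≠ 0 := fun h => hc.1 (key0 u h)
    have h1 : (φ u).val ≠ n - 1 := fun h => hc.2 (key1 u h)
    have h2 := (φ u).isLt
    exact path_not_boundary (by omega) (by omega) (φ v) h'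
  have hMMD : MMD G a b := ⟨hmab, hmba⟩
  have hMMD' : MMD G b a := ⟨hmba, hmab⟩
  refine ⟨⟨⟨fun u => if u.val = a then Sum.inl 0 else Sum.inr 0,
    fun x => Sum.elim (fun _ => ⟨a, ha⟩) (fun _ => ⟨b, hb⟩) x, ?_, ?_⟩, ?_⟩⟩
  · rintro ⟨u, hu⟩
    rcases hbd u hu with rfl | rfl
    · simp
    · simp [hne.symm]
  · rintro (x | x)
    · simp [Subsingleton.elim (0 : Fin 1) x]
    · simp [hne.symm, Subsingleton.elim (0 : Fin 1) x]
  · rintro ⟨u, hu⟩ ⟨v, hv⟩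
    rcases hbd u hu with rfl | rfl <;> rcases hbd v hv with rfl | rfl <;>
      simp [srGraph_adj, completeBipartiteGraph, hne, hne.symm, hMMD, hMMD']

lemma stmt7_forward [Fintype V] {G : SimpleGraph V} (hG : G.Connected)
    (hn : 2 ≤ Fintype.card V)
    {r : ℕ} (hr : 1 ≤ r) (ψ : srGraph G ≃g completeBipartiteGraph (Fin 1) (Fin r)) :
    Nonempty (G ≃g pathGraph (Fintype.card V)) ∧ r = 1 := by
  classical
  set c : V := (ψ.symm (Sum.inl 0)).val with hc
  have hcB : c ∈ boundary G := (ψ.symm (Sum.inl 0)).property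
  set leaf : Fin r → V := fun i => (ψ.symm (Sum.inr i)).val with hleaf
  have hleafB : ∀ i, leaf i ∈ boundary G := fun i => (ψ.symm (Sum.inr i)).property
  have hK : ∀ i : Fin r, (completeBipartiteGraph (Fin 1) (Fin r)).Adj
      (Sum.inl 0) (Sum.inr i) := by
    intro i; simp [completeBipartiteGraph]
  have hMMDcl : ∀ i : Fin r, c ≠ leaf i ∧ MMD G c (leaf i) := by
    intro i
    have := ψ.symm.map_rel_iff.mpr (hK i)
    exact (srGraph_adj G _ _).mp this
  have himg : ∀ (x : V) (hx : x ∈ boundary G),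
      x = c ∨ ∃ i, x = leaf i := by
    intro x hx
    cases hψx : ψ ⟨x, hx⟩ with
    | inl i =>
      left
      have := congrArg ψ.symm hψx
      rw [ψ.symm_apply_apply] at this
      rw [hc, Subsingleton.elim (0 : Fin 1) i, ← this]
    | inr i =>
      right
      refine ⟨i, ?_⟩
      have := congrArg ψ.symm hψx
      rw [ψ.symm_apply_apply] at this
      exact congrArg Subtype.val this
  have hCover : ∀ x y : V, MMD G x y → x ≠ y → x = c ∨ y = c := by
    intro x y hxy hne
    have hx : x ∈ boundary G := ⟨y, hxy.1⟩
    have hy : y ∈ boundary G := ⟨x, hxy.2⟩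
    have hadj : (srGraph G).Adj ⟨x, hx⟩ ⟨y, hy⟩ := (srGraph_adj G _ _).mpr ⟨hne, hxy⟩
    have hK' := ψ.map_rel_iff.mpr hadj
    cases hψx : ψ ⟨x, hx⟩ with
    | inl i =>
      left
      have := congrArg ψ.symm hψx
      rw [ψ.symm_apply_apply] at this
      rw [hc, Subsingleton.elim (0 : Fin 1) i, ← this]
    | inr i =>
      cases hψy : ψ ⟨y, hy⟩ with
      | inl j =>
        right
        have := congrArg ψ.symm hψy
        rw [ψ.symm_apply_apply] at this
        rw [hc, Subsingleton.elim (0 : Fin 1) j, ← this]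
      | inr j =>
        rw [hψx, hψy] at hK'
        simp [completeBipartiteGraph] at hK'
  have hr1 : r = 1 := by
    by_contra hr2
    have hr2 : 2 ≤ r := by omega
    have : Nonempty (Fin r) := ⟨⟨0, by omega⟩⟩
    obtain ⟨i0, -, hmax⟩ := Finset.exists_max_image (Finset.univ : Finset (Fin r))
      (fun i => G.dist c (leaf i)) Finset.univ_nonempty
    set L := leaf i0 with hL
    set j : Fin r := if i0.val = 0 then ⟨1, by omega⟩ else ⟨0, by omega⟩ with hj
    have hji : j ≠ i0 := by
      by_cases h0 : i0.val = 0 <;> simp [hj, h0, Fin.ext_iff] <;> omega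
    set l' := leaf j with hl'
    have hleafinj : ∀ i i' : Fin r, leaf i = leaf i' → i = i' := by
      intro i i' h
      have h2 : ψ.symm (Sum.inr i) = ψ.symm (Sum.inr i') := Subtype.ext h
      have := ψ.symm.injective h2
      exact Sum.inr.inj this
    have hl'L : l' ≠ L := fun h => hji (hleafinj _ _ h)
    obtain ⟨x, hxmax, hxeq⟩ := lemE hG L l'
    obtain ⟨y, hxy, hyeq⟩ := lemMMD hG hxmax
    have hxyne := mmd_ne hG hn hxy
    have hdLl' : 1 ≤ G.dist L l' := hG.pos_dist_of_ne (Ne.symm hl'L)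
    rcases hCover x y hxy hxyne with rfl | rfl
    · have hml'c : MaxDistant G l' c := (hMMDcl j).2.2
      obtain ⟨w, hadjw, hw⟩ := exists_toward hG hl'L
      have t1 : G.dist c L ≤ G.dist c w + G.dist w L := hG.dist_triangle
      have t2 : G.dist c w ≤ G.dist c l' := hml'c w hadjw
      have e1 : G.dist L c = G.dist c L := dist_comm ..
      have e2 : G.dist L l' = G.dist l' L := dist_comm ..
      have e3 : G.dist l' c = G.dist c l' := dist_comm ..
      omega
    · have hyne : x ≠ c := hxyne
      have hx : x ∈ boundary G := ⟨c, hxy.1⟩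
      rcases himg x hx with rfl | ⟨i1, rfl⟩
      · exact hyne rfl
      · have hmaxi1 := hmax i1 (Finset.mem_univ _)
        have e1 : G.dist (leaf i1) L = G.dist L (leaf i1) := dist_comm ..
        have e2 : G.dist (leaf i1) c = G.dist c (leaf i1) := dist_comm ..
        have e3 : G.dist L c = G.dist c L := dist_comm ..
        have hd1 : G.dist L (leaf i1) ≥ G.dist L l' := by omega
        omega
  subst hr1
  refine ⟨?_, rfl⟩
  set b : V := leaf 0 with hb
  have hab : c ≠ b := (hMMDcl 0).1
  have hMMDab : MMD G c b := (hMMDcl 0).2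
  have huniq : ∀ x y : V, MMD G x y → x ≠ y → (x = c ∧ y = b) ∨ (x = b ∧ y = c) := by
    intro x y hxy hne
    have hx : x ∈ boundary G := ⟨y, hxy.1⟩
    have hy : y ∈ boundary G := ⟨x, hxy.2⟩
    rcases himg x hx with hxc | ⟨i, hxl⟩
    · rcases himg y hy with hyc | ⟨i, hyl⟩
      · exact absurd (hxc.trans hyc.symm) hne
      · left; exact ⟨hxc, by rw [hyl, Subsingleton.elim i 0]⟩
    · rcases himg y hy with hyc | ⟨i', hyl⟩
      · right; exact ⟨by rw [hxl, Subsingleton.elim i 0], hyc⟩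
      · exfalso
        apply hne
        rw [hxl, hyl, Subsingleton.elim i i']
  set D := G.dist c b with hD
  have G3 : ∀ v, G.dist c v + G.dist v b = D := by
    intro v
    obtain ⟨x, y, hxy, heq⟩ := claim1 hG v
    rcases huniq x y hxy (mmd_ne hG hn hxy) with ⟨rfl, rfl⟩ | ⟨rfl, rfl⟩
    · omega
    · have e1 : G.dist b c = G.dist c b := dist_comm ..
      have e2 : G.dist b v = G.dist v b := dist_comm ..
      have e3 : G.dist v c = G.dist c v := dist_comm ..
      omega
  have G6 : Function.Injective (fun v => G.dist c v) := by
    intro u v h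
    simp only at h
    by_contra hne
    obtain ⟨x, hxmax, hxeq⟩ := lemE hG v u
    obtain ⟨y, hxy, -⟩ := lemMMD hG hxmax
    have hvu : 1 ≤ G.dist v u := hG.pos_dist_of_ne (fun h' => hne h'.symm)
    rcases huniq x y hxy (mmd_ne hG hn hxy) with ⟨rfl, -⟩ | ⟨rfl, -⟩
    · have e1 : G.dist v c = G.dist c v := dist_comm ..
      have e2 : G.dist u c = G.dist c u := dist_comm ..
      omega
    · have h3u := G3 u
      have h3v := G3 v
      omega
  have G8 : ∀ u v : V, G.Adj u v →
      G.dist c u + 1 = G.dist c v ∨ G.dist c v + 1 = G.dist c u := by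
    intro u v hadj
    obtain ⟨x, y, hxy, hd⟩ := edge_lemma hG hadj
    rcases huniq x y hxy (mmd_ne hG hn hxy) with ⟨rfl, -⟩ | ⟨rfl, -⟩
    · left
      have e1 : G.dist v c = G.dist c v := dist_comm ..
      have e2 : G.dist u c = G.dist c u := dist_comm ..
      omega
    · right
      have h3u := G3 u
      have h3v := G3 v
      omega
  have G9 : ∀ u v : V, G.dist c u + 1 = G.dist c v → G.Adj u v := by
    intro u v hd
    have hub : u ≠ b := by
      intro h
      have := G3 v
      rw [h] at hd
      omega
    obtain ⟨w, hadjw, hw⟩ := exists_toward hG hub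
    have hfw : G.dist c w = G.dist c u + 1 := by
      have h3u := G3 u
      have h3w := G3 w
      omega
    have : w = v := G6 (by simp only; omega)
    exact this ▸ hadjw
  have hemb : ∀ v : V, G.dist c v < Fintype.card V := by
    intro v
    have h1 := G3 v
    have h2 := my_dist_lt_card hG c b
    omega
  let f : V → Fin (Fintype.card V) := fun v => ⟨G.dist c v, hemb v⟩
  have hfinj : Function.Injective f := by
    intro u v h
    exact G6 (by simpa [f] using congrArg Fin.val h)
  have hfbij : Function.Bijective f :=
    (Fintype.bijective_iff_injective_and_card f).mpr ⟨hfinj, by simp⟩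
  refine ⟨⟨Equiv.ofBijective f hfbij, ?_⟩⟩
  intro u v
  rw [pathGraph_adj]
  simp only [Equiv.ofBijective_apply, f]
  constructor
  · rintro (h | h)
    · exact G9 u v h
    · exact (G9 v u h).symm
  · intro hadj
    rcases G8 u v hadj with h | h
    · exact Or.inl h
    · exact Or.inr h

theorem stmt7 [Fintype V] (G : SimpleGraph V) (hG : G.Connected)
    (hn : 2 ≤ Fintype.card V) (r : ℕ) (hr : 1 ≤ r) :
    Nonempty (srGraph G ≃g completeBipartiteGraph (Fin 1) (Fin r)) ↔
      (Nonempty (G ≃g pathGraph (Fintype.card V)) ∧ r = 1) := by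
  constructor
  · rintro ⟨ψ⟩
    exact stmt7_forward hG hn hr ψ
  · rintro ⟨⟨φ⟩, rfl⟩
    exact stmt7_backward G hG hn φ
end

section
/- For every integer n ≥ 3 with n ≠ 4, there exists a finite connected graph G such that the strong resolving graph G_SR is isomorphic to the cycle C_n on n vertices. -/
open SimpleGraph

variable {V : Type*}

open Fin.NatCast

lemma natCast_fin_eq_iff (k : ℕ) (a b : ℕ) :
    (a : Fin (k+5)) = (b : Fin (k+5)) ↔ a % (k+5) = b % (k+5) := by
  rw [Fin.ext_iff, Fin.val_natCast, Fin.val_natCast]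

lemma shift_eq_iff (k : ℕ) (u : Fin (k+5)) (a b : ℕ) :
    u + (a : Fin (k+5)) = u + (b : Fin (k+5)) ↔ a % (k+5) = b % (k+5) := by
  rw [add_right_inj, natCast_fin_eq_iff]

lemma cyc_adj_iff (k : ℕ) {u v : Fin (k+5)} :
    (cycleGraph (k+5)).Adj u v ↔ v = u + 1 ∨ u = v + 1 := by
  have : (cycleGraph (k+3+2)).Adj u v ↔ u - v = 1 ∨ v - u = 1 := cycleGraph_adj
  rw [this, sub_eq_iff_eq_add, sub_eq_iff_eq_add, add_comm (1 : Fin (k+5)) v,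
    add_comm (1 : Fin (k+5)) u, or_comm]

lemma shift_add_one (k : ℕ) (u : Fin (k+5)) (c : ℕ) :
    u + (c : Fin (k+5)) + 1 = u + ((c+1 : ℕ) : Fin (k+5)) := by
  push_cast; rw [add_assoc]

lemma cyc_adj_shift (k : ℕ) (u : Fin (k+5)) (a b : ℕ) :
    (cycleGraph (k+5)).Adj (u + (a : Fin (k+5))) (u + (b : Fin (k+5))) ↔
      (a+1) % (k+5) = b % (k+5) ∨ (b+1) % (k+5) = a % (k+5) := by
  rw [cyc_adj_iff, shift_add_one, shift_add_one, shift_eq_iff, shift_eq_iff]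
  constructor <;> rintro (h|h) <;> simp [h]

lemma compl_adj_shift (k : ℕ) (u : Fin (k+5)) (a b : ℕ) :
    (cycleGraph (k+5))ᶜ.Adj (u + (a : Fin (k+5))) (u + (b : Fin (k+5))) ↔
      ¬ (a % (k+5) = b % (k+5)) ∧
      ¬ ((a+1) % (k+5) = b % (k+5) ∨ (b+1) % (k+5) = a % (k+5)) := by
  rw [compl_adj, cyc_adj_shift, ne_eq, shift_eq_iff]

lemma compl_adj_small (k : ℕ) (u : Fin (k+5)) {a b : ℕ} (ha : a + 1 < k+5) (hb : b + 1 < k+5)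
    (hab : a ≠ b) (h1 : a+1 ≠ b) (h2 : b+1 ≠ a) :
    (cycleGraph (k+5))ᶜ.Adj (u + (a : Fin (k+5))) (u + (b : Fin (k+5))) := by
  rw [compl_adj_shift, Nat.mod_eq_of_lt (by omega : a < k+5), Nat.mod_eq_of_lt (by omega : b < k+5),
    Nat.mod_eq_of_lt ha, Nat.mod_eq_of_lt hb]
  omega

lemma two_walk' (k : ℕ) (u : Fin (k+5)) :
    ∃ p : ((cycleGraph (k+5))ᶜ).Walk u (u + 1), p.length = 2 := by
  have hA : (cycleGraph (k+5))ᶜ.Adj u (u + ((3:ℕ) : Fin (k+5))) := by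
    have := compl_adj_small k u (a := 0) (b := 3) (by omega) (by omega) (by omega) (by omega)
      (by omega)
    simpa using this
  have hB : (cycleGraph (k+5))ᶜ.Adj (u + ((3:ℕ) : Fin (k+5))) (u + 1) := by
    have := compl_adj_small k u (a := 3) (b := 1) (by omega) (by omega) (by omega) (by omega)
      (by omega)
    simpa using this
  exact ⟨Walk.cons hA (Walk.cons hB Walk.nil), rfl⟩

lemma two_walk (k : ℕ) {u v : Fin (k+5)} (h : (cycleGraph (k+5)).Adj u v) :
    ∃ p : ((cycleGraph (k+5))ᶜ).Walk u v, p.length = 2 := by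
  rw [cyc_adj_iff] at h
  rcases h with h | h
  · subst h; exact two_walk' k u
  · subst h
    obtain ⟨p, hp⟩ := two_walk' k v
    exact ⟨p.reverse, by simpa using hp⟩

lemma walk_le_two (k : ℕ) (u v : Fin (k+5)) :
    ∃ p : ((cycleGraph (k+5))ᶜ).Walk u v, p.length ≤ 2 := by
  by_cases he : u = v
  · subst he; exact ⟨Walk.nil, by simp⟩
  by_cases ha : (cycleGraph (k+5))ᶜ.Adj u v
  · exact ⟨ha.toWalk, by simp⟩
  · have hC : (cycleGraph (k+5)).Adj u v := by
      by_contra hC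
      exact ha ((compl_adj _ u v).mpr ⟨he, hC⟩)
    obtain ⟨p, hp⟩ := two_walk k hC
    exact ⟨p, hp.le⟩

lemma complC_connected (k : ℕ) : ((cycleGraph (k+5))ᶜ).Connected := by
  rw [connected_iff]
  refine ⟨fun u v => ?_, ⟨0⟩⟩
  obtain ⟨p, _⟩ := walk_le_two k u v
  exact ⟨p⟩

lemma dist_le_two (k : ℕ) (u v : Fin (k+5)) : ((cycleGraph (k+5))ᶜ).dist u v ≤ 2 := by
  obtain ⟨p, hp⟩ := walk_le_two k u v
  exact le_trans (dist_le p) hp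

lemma dist_eq_two (k : ℕ) {u v : Fin (k+5)} (h : (cycleGraph (k+5)).Adj u v) :
    ((cycleGraph (k+5))ᶜ).dist u v = 2 := by
  have hle := dist_le_two k u v
  have hne : u ≠ v := h.ne
  have hpos : 0 < ((cycleGraph (k+5))ᶜ).dist u v :=
    ((complC_connected k).preconnected u v).pos_dist_of_ne hne
  have h1 : ((cycleGraph (k+5))ᶜ).dist u v ≠ 1 := by
    intro h1
    have := dist_eq_one_iff_adj.mp h1
    rw [compl_adj] at this
    exact this.2 h
  omega


lemma mmd_of_cyc (k : ℕ) {u v : Fin (k+5)} (h : (cycleGraph (k+5)).Adj u v) :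
    MMD ((cycleGraph (k+5))ᶜ) u v := by
  constructor
  · intro w _
    rw [dist_eq_two k h.symm]
    exact dist_le_two k v w
  · intro w _
    rw [dist_eq_two k h]
    exact dist_le_two k u w

lemma not_maxdistant (k : ℕ) {u v : Fin (k+5)} (hne : u ≠ v)
    (hnC : ¬ (cycleGraph (k+5)).Adj u v) : ¬ MaxDistant ((cycleGraph (k+5))ᶜ) u v := by
  intro hmd
  have hadj : ((cycleGraph (k+5))ᶜ).Adj u v := (compl_adj _ u v).mpr ⟨hne, hnC⟩
  have hdvu : ((cycleGraph (k+5))ᶜ).dist v u = 1 := dist_eq_one_iff_adj.mpr hadj.symm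
  -- find w with C.Adj v w and Gᶜ.Adj u w
  have key : ∃ w, (cycleGraph (k+5)).Adj v w ∧ ((cycleGraph (k+5))ᶜ).Adj u w := by
    rw [cyc_adj_iff] at hnC
    push_neg at hnC
    obtain ⟨hn1, hn2⟩ := hnC
    by_cases h2 : u = v + ((2:ℕ) : Fin (k+5))
    · refine ⟨v + ((k+4 : ℕ) : Fin (k+5)), ?_, ?_⟩
      · have : (cycleGraph (k+5)).Adj (v + ((0:ℕ) : Fin (k+5))) (v + ((k+4 : ℕ) : Fin (k+5))) := by
          rw [cyc_adj_shift]
          right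
          rw [Nat.mod_self, Nat.mod_eq_of_lt (by omega : (0:ℕ) < k+5)]
        simpa using this
      · rw [h2, compl_adj_shift, Nat.mod_eq_of_lt (show 2 < k+5 by omega),
          Nat.mod_eq_of_lt (show k+4 < k+5 by omega), Nat.mod_eq_of_lt (show 2+1 < k+5 by omega),
          show k+4+1 = k+5 from rfl, Nat.mod_self]
        omega
    · refine ⟨v + ((1:ℕ) : Fin (k+5)), ?_, ?_⟩
      · have : (cycleGraph (k+5)).Adj (v + ((0:ℕ) : Fin (k+5))) (v + ((1 : ℕ) : Fin (k+5))) := by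
          rw [cyc_adj_shift]
          left
          norm_num
        simpa using this
      · rw [compl_adj]
        constructor
        · simpa using hn2
        · rw [cyc_adj_iff]
          push_neg
          constructor
          · intro hc
            rw [show ((1:ℕ) : Fin (k+5)) = (1 : Fin (k+5)) by push_cast; rfl,
              add_left_inj] at hc
            exact hne hc.symm
          · intro hc
            apply h2
            rw [hc, shift_add_one]
      -- done
  obtain ⟨w, hCvw, hGuw⟩ := key
  have := hmd w hGuw
  rw [hdvu, dist_eq_two k hCvw] at this
  omega

lemma sr_adj_iff (k : ℕ) (u v : Fin (k+5)) :
    (srGraphI ((cycleGraph (k+5))ᶜ)).Adj u v ↔ (cycleGraph (k+5)).Adj u v := by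
  constructor
  · rintro ⟨hne, hmmd⟩
    by_contra hC
    exact not_maxdistant k hne hC hmmd.1
  · intro h
    exact ⟨h.ne, mmd_of_cyc k h⟩

lemma boundary_compl (k : ℕ) (u : Fin (k+5)) : u ∈ boundary ((cycleGraph (k+5))ᶜ) := by
  have hC : (cycleGraph (k+5)).Adj u (u + 1) := by
    have : (cycleGraph (k+5)).Adj (u + ((0:ℕ) : Fin (k+5))) (u + ((1 : ℕ) : Fin (k+5))) := by
      rw [cyc_adj_shift]
      left
      norm_num
    simpa using this
  exact ⟨u + 1, (mmd_of_cyc k hC).1⟩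

lemma top_maxdistant {m : ℕ} {u v : Fin m} (hne : u ≠ v) :
    MaxDistant (⊤ : SimpleGraph (Fin m)) u v := by
  intro w hw
  have hdvu : (⊤ : SimpleGraph (Fin m)).dist v u = 1 :=
    dist_eq_one_iff_adj.mpr (by simp [hne.symm])
  rw [hdvu]
  by_cases hvw : v = w
  · subst hvw
    simp [SimpleGraph.dist_self]
  · exact le_of_eq (dist_eq_one_iff_adj.mpr (by simp [hvw]))

lemma top_sr_adj (u v : Fin 3) :
    (srGraphI (⊤ : SimpleGraph (Fin 3))).Adj u v ↔ u ≠ v := by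
  constructor
  · exact fun h => h.1
  · intro h
    exact ⟨h, top_maxdistant h, top_maxdistant h.symm⟩

lemma top_boundary (u : Fin 3) : u ∈ boundary (⊤ : SimpleGraph (Fin 3)) := by
  refine ⟨u + 1, top_maxdistant ?_⟩
  have hu := u.isLt
  rw [Ne, Fin.ext_iff, Fin.add_def]
  simp only [Fin.val_one]
  omega

theorem stmt10 (n : ℕ) (hn : 3 ≤ n) (hn4 : n ≠ 4) :
    ∃ (m : ℕ) (G : SimpleGraph (Fin m)), G.Connected ∧
      Nonempty (srGraph G ≃g cycleGraph n) := by
  rcases eq_or_ne n 3 with rfl | h3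
  · refine ⟨3, ⊤, ?_, ?_⟩
    · rw [connected_iff]
      refine ⟨fun u v => ?_, ⟨0⟩⟩
      by_cases h : u = v
      · subst h
        exact Reachable.refl u
      · exact SimpleGraph.Adj.reachable (by simp [h])
    · refine ⟨⟨Equiv.subtypeUnivEquiv top_boundary, ?_⟩⟩
      intro a b
      show (cycleGraph 3).Adj a.val b.val ↔ (srGraphI (⊤ : SimpleGraph (Fin 3))).Adj a.val b.val
      rw [cycleGraph_three_eq_top, top_sr_adj, top_adj]
  · obtain ⟨k, rfl⟩ : ∃ k, n = k + 5 := ⟨n - 5, by omega⟩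
    refine ⟨k + 5, (cycleGraph (k+5))ᶜ, complC_connected k, ?_⟩
    refine ⟨⟨Equiv.subtypeUnivEquiv (boundary_compl k), ?_⟩⟩
    intro a b
    show (cycleGraph (k+5)).Adj a.val b.val ↔ (srGraphI ((cycleGraph (k+5))ᶜ)).Adj a.val b.val
    exact (sr_adj_iff k a.val b.val).symm
end

section
/- Let G and H be finite connected graphs such that H_SR is bipartite and has a perfect matching. Suppose that every connected component of G_SR is Hamiltonian or has a perfect matching. Then the strong resolving graph (G □ H)_SR is bipartite and has a perfect matching. -/
open SimpleGraph

variable {V : Type*}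

attribute [local instance] Classical.propDecidable
section AuxSR

variable {α β : Type*}

lemma aux_exists_adj_of_connected {G : SimpleGraph α} (hG : G.Connected) {u y : α}
    (hy : y ≠ u) : ∃ w, G.Adj u w := by
  obtain ⟨p⟩ := hG.preconnected u y
  cases p with
  | nil => exact absurd rfl hy
  | cons h _ => exact ⟨_, h⟩

lemma aux_boxProd_walk_le {G : SimpleGraph α} {H : SimpleGraph β}
    (hG : G.Connected) (hH : H.Connected) :
    ∀ {x y : α × β} (w : (G □ H).Walk x y),
      G.dist x.1 y.1 + H.dist x.2 y.2 ≤ w.length := by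
  intro x y w
  induction w with
  | nil => simp
  | @cons x z y h q ih =>
    rw [SimpleGraph.Walk.length_cons]
    rcases h with ⟨hA, h2⟩ | ⟨hA, h1⟩
    · have ht := hG.dist_triangle (u := x.1) (v := z.1) (w := y.1)
      have h1' : G.dist x.1 z.1 = 1 := SimpleGraph.dist_eq_one_iff_adj.mpr hA
      rw [h2]
      omega
    · have ht := hH.dist_triangle (u := x.2) (v := z.2) (w := y.2)
      have h1' : H.dist x.2 z.2 = 1 := SimpleGraph.dist_eq_one_iff_adj.mpr hA
      rw [h1]
      omega

lemma aux_boxProd_dist {G : SimpleGraph α} {H : SimpleGraph β}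
    (hG : G.Connected) (hH : H.Connected) (x y : α × β) :
    (G □ H).dist x y = G.dist x.1 y.1 + H.dist x.2 y.2 := by
  obtain ⟨x1, x2⟩ := x
  obtain ⟨y1, y2⟩ := y
  have hconn : (G □ H).Connected := by
    haveI : Nonempty (α × β) := ⟨(hG.nonempty.some, hH.nonempty.some)⟩
    exact ⟨hG.preconnected.boxProd hH.preconnected⟩
  refine le_antisymm ?_ ?_
  · obtain ⟨p, hp⟩ := hG.exists_walk_length_eq_dist x1 y1
    obtain ⟨q, hq⟩ := hH.exists_walk_length_eq_dist x2 y2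
    have hle := SimpleGraph.dist_le ((p.boxProdLeft H x2).append (q.boxProdRight G y1))
    simp only [SimpleGraph.Walk.length_append, SimpleGraph.Walk.boxProdLeft,
      SimpleGraph.Walk.boxProdRight, SimpleGraph.Walk.length_map, hp, hq] at hle
    have e := SimpleGraph.Walk.length_append (p.boxProdLeft H x2) (q.boxProdRight G y1)
    simp only [SimpleGraph.Walk.boxProdLeft, SimpleGraph.Walk.boxProdRight,
      SimpleGraph.Walk.length_map, hp, hq] at e
    have e1 : (p.boxProdLeft H x2).length = p.length := SimpleGraph.Walk.length_map _ _
    have e2 : (q.boxProdRight G y1).length = q.length := SimpleGraph.Walk.length_map _ _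
    have e3 := hle.trans e.le
    simp only [SimpleGraph.Walk.boxProdLeft, SimpleGraph.Walk.boxProdRight] at e1 e2
    rw [e1, e2, hp, hq] at e3
    exact e3
  · obtain ⟨w, hw⟩ := hconn.exists_walk_length_eq_dist (x1, x2) (y1, y2)
    rw [← hw]
    exact aux_boxProd_walk_le hG hH w

end AuxSR
section AuxSR2

variable {α β : Type*}

lemma aux_maxDistant_boxProd {G : SimpleGraph α} {H : SimpleGraph β}
    (hG : G.Connected) (hH : H.Connected) {a c : α} {b d : β} :
    MaxDistant (G □ H) (a, b) (c, d) ↔ MaxDistant G a c ∧ MaxDistant H b d := by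
  constructor
  · intro h
    refine ⟨fun w hw => ?_, fun w hw => ?_⟩
    · have h1 := h (w, b) (Or.inl ⟨hw, rfl⟩)
      rw [aux_boxProd_dist hG hH, aux_boxProd_dist hG hH] at h1
      simp only at h1
      omega
    · have h1 := h (a, w) (Or.inr ⟨hw, rfl⟩)
      rw [aux_boxProd_dist hG hH, aux_boxProd_dist hG hH] at h1
      simp only at h1
      omega
  · rintro ⟨h1, h2⟩ ⟨w1, w2⟩ hw
    rw [aux_boxProd_dist hG hH, aux_boxProd_dist hG hH]
    simp only
    rcases hw with ⟨hA, he⟩ | ⟨hA, he⟩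
    · have := h1 w1 hA
      simp only at he
      rw [← he]
      omega
    · have := h2 w2 hA
      simp only at he
      rw [← he]
      omega

lemma aux_boundary_boxProd {G : SimpleGraph α} {H : SimpleGraph β}
    (hG : G.Connected) (hH : H.Connected) (x : α × β) :
    x ∈ boundary (G □ H) ↔ x.1 ∈ boundary G ∧ x.2 ∈ boundary H := by
  obtain ⟨a, b⟩ := x
  constructor
  · rintro ⟨⟨c, d⟩, h⟩
    rw [aux_maxDistant_boxProd hG hH] at h
    exact ⟨⟨c, h.1⟩, ⟨d, h.2⟩⟩
  · rintro ⟨⟨c, hc⟩, ⟨d, hd⟩⟩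
    exact ⟨(c, d), (aux_maxDistant_boxProd hG hH).mpr ⟨hc, hd⟩⟩

lemma aux_mmd_boxProd {G : SimpleGraph α} {H : SimpleGraph β}
    (hG : G.Connected) (hH : H.Connected) {a c : α} {b d : β} :
    MMD (G □ H) (a, b) (c, d) ↔ MMD G a c ∧ MMD H b d := by
  unfold MMD
  rw [aux_maxDistant_boxProd hG hH, aux_maxDistant_boxProd hG hH]
  tauto

lemma aux_exists_mmd_partner {α : Type*} [Fintype α] {G : SimpleGraph α} (hG : G.Connected)
    {u : α} (hu : u ∈ boundary G) {n : α} (hn : G.Adj u n) :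
    ∃ w, w ≠ u ∧ MMD G u w ∧ w ∈ boundary G := by
  obtain ⟨v, hv⟩ := hu
  obtain ⟨w, hwS, hmax⟩ := Set.exists_max_image {x | MaxDistant G u x}
      (fun x => G.dist u x) (Set.toFinite _) ⟨v, hv⟩
  have hwu : w ≠ u := by
    rintro rfl
    have h1 := hwS n hn
    rw [SimpleGraph.dist_self] at h1
    have h2 := hG.pos_dist_of_ne hn.ne
    omega
  have hMDwu : MaxDistant G w u := by
    intro y hy
    by_contra hlt
    push_neg at hlt
    have hy1 : G.dist w y = 1 := SimpleGraph.dist_eq_one_iff_adj.mpr hy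
    have htri : G.dist u y ≤ G.dist u w + G.dist w y := hG.dist_triangle
    have heq : G.dist u y = G.dist u w + 1 := by omega
    have hyS : MaxDistant G u y := by
      intro z hz
      have t1 : G.dist y z ≤ G.dist y w + G.dist w z := hG.dist_triangle
      have t2 : G.dist w z ≤ G.dist w u := hwS z hz
      have t3 : G.dist y w = G.dist w y := SimpleGraph.dist_comm ..
      have t4 : G.dist y u = G.dist u y := SimpleGraph.dist_comm ..
      have t5 : G.dist w u = G.dist u w := SimpleGraph.dist_comm ..
      omega
    have := hmax y hyS
    omega
  exact ⟨w, hwu, ⟨hwS, hMDwu⟩, ⟨u, hMDwu⟩⟩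

lemma aux_pm_invol {γ : Type*} {Γ : SimpleGraph γ} {M : Γ.Subgraph}
    (hM : M.IsPerfectMatching) :
    ∃ m : γ → γ, (∀ x, m (m x) = x) ∧ ∀ x, Γ.Adj x (m x) := by
  have h : ∀ v : γ, ∃! w, M.Adj v w := fun v => hM.1 (hM.2 v)
  choose m hm hmu using h
  exact ⟨m, fun x => (hmu (m x) x (hm x).symm).symm, fun x => M.adj_sub (hm x)⟩

end AuxSR2
section AuxSR3

lemma aux_ham_perm {γ : Type*} [DecidableEq γ] {Γ : SimpleGraph γ} {a : γ} {p : Γ.Walk a a}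
    (hp : p.IsHamiltonianCycle) : ∃ σ : Equiv.Perm γ, ∀ x, Γ.Adj x (σ x) := by
  have hnn : ¬ p.Nil := by
    rw [SimpleGraph.Walk.nil_iff_length_eq]
    have := hp.isCycle.three_le_length
    omega
  set l := p.support.tail with hl
  have hnodup : l.Nodup := hp.isCycle.support_nodup
  have hmem : ∀ x : γ, x ∈ l := by
    intro x
    have h1 : x ∈ p.tail.support := hp.isHamiltonian_tail.mem_support x
    rwa [p.support_tail_of_not_nil hnn] at h1
  have hlpos : 0 < l.length := List.length_pos_of_mem (hmem a)
  have hlne : l ≠ [] := List.ne_nil_of_length_pos hlpos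
  have hchain : List.Chain' Γ.Adj (a :: l) := by
    have := p.isChain_adj_support
    rwa [p.support_eq_cons] at this
  refine ⟨l.formPerm, fun x => ?_⟩
  obtain ⟨i, hi, hx⟩ := List.mem_iff_getElem.mp (hmem x)
  rw [← hx, List.formPerm_apply_getElem _ hnodup i hi]
  by_cases hlt : i + 1 < l.length
  · simp only [Nat.mod_eq_of_lt hlt]
    have hc := List.isChain_iff_getElem.mp hchain (i + 1) (by simp; omega)
    simpa using hc
  · have hieq : i = l.length - 1 := by omega
    have hmod : (i + 1) % l.length = 0 := by
      have h2 : i + 1 = l.length := by omega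
      rw [h2, Nat.mod_self]
    simp only [hmod]
    have hlast : l.getLast hlne = a := by
      have hgl := List.getLast_tail (l := p.support) (show p.support.tail ≠ [] from hlne)
      rw [p.getLast_support] at hgl
      exact hgl
    rw [List.getLast_eq_getElem] at hlast
    have hc : Γ.Adj a l[0] := by
      have := List.isChain_iff_getElem.mp hchain 0 (by simp; omega)
      simpa using this
    rw [← hlast] at hc
    subst hieq
    exact hc

end AuxSR3
section AuxSR4

lemma aux_G_perm {α : Type*} [Fintype α] (G : SimpleGraph α) (hG : G.Connected)
    (hcomp : ∀ c : (srGraph G).ConnectedComponent,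
      ((srGraph G).induce c.supp).IsHamiltonian ∨
        ∃ M : ((srGraph G).induce c.supp).Subgraph, M.IsPerfectMatching) :
    ∃ φ : Equiv.Perm ↥(boundary G), ∀ x : ↥(boundary G), MMD G ↑x ↑(φ x) := by
  classical
  by_cases htriv : ∀ y z : α, y = z
  · exact ⟨Equiv.refl _, fun x =>
      ⟨fun w hw => absurd (htriv _ _) hw.ne, fun w hw => absurd (htriv _ _) hw.ne⟩⟩
  push_neg at htriv
  obtain ⟨y₀, z₀, hyz⟩ := htriv
  have hsig : ∀ c : (srGraph G).ConnectedComponent,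
      ∃ σ : Equiv.Perm ↥c.supp, ∀ x : ↥c.supp, (srGraph G).Adj ↑x ↑(σ x) := by
    intro c
    rcases hcomp c with hham | ⟨M, hM⟩
    · have hcard : Fintype.card ↥c.supp ≠ 1 := by
        intro h1
        obtain ⟨u, hu⟩ := c.exists_rep
        have hne : ∃ t : α, t ≠ ↑u := by
          by_cases h : y₀ = (u : α)
          · exact ⟨z₀, fun hh => hyz (h ▸ hh.symm ▸ rfl)⟩
          · exact ⟨y₀, h⟩
        obtain ⟨t, ht⟩ := hne
        obtain ⟨n, hn⟩ := aux_exists_adj_of_connected hG ht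
        obtain ⟨w, hwne, hmmd, hwb⟩ := aux_exists_mmd_partner hG u.2 hn
        have hadj : (srGraph G).Adj u ⟨w, hwb⟩ := ⟨Ne.symm hwne, hmmd⟩
        have husupp : u ∈ c.supp := by
          rw [SimpleGraph.ConnectedComponent.mem_supp_iff]; exact hu
        have hwsupp : (⟨w, hwb⟩ : ↥(boundary G)) ∈ c.supp := by
          rw [SimpleGraph.ConnectedComponent.mem_supp_iff, ← hu]
          exact SimpleGraph.ConnectedComponent.sound hadj.symm.reachable
        have heq := Fintype.card_le_one_iff.mp (le_of_eq h1)
          ⟨u, husupp⟩ ⟨⟨w, hwb⟩, hwsupp⟩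
        exact hadj.ne (congrArg Subtype.val heq)
      obtain ⟨a, q, hq⟩ := hham hcard
      obtain ⟨σ, hσ⟩ := aux_ham_perm hq
      exact ⟨σ, fun x => hσ x⟩
    · obtain ⟨m, hminv, hmadj⟩ := aux_pm_invol hM
      exact ⟨Function.Involutive.toPerm m hminv, fun x => hmadj x⟩
  choose σ hσ using hsig
  have hmem : ∀ x : ↥(boundary G),
      x ∈ ((srGraph G).connectedComponentMk x).supp := fun x => rfl
  let g : ∀ c : (srGraph G).ConnectedComponent, ↥c.supp → ↥(boundary G) :=
    fun c x => ↑(σ c x)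
  have hg : ∀ (c c' : (srGraph G).ConnectedComponent) (h : c = c') (x : ↥(boundary G))
      (hx : x ∈ c.supp) (hx' : x ∈ c'.supp), g c ⟨x, hx⟩ = g c' ⟨x, hx'⟩ := by
    rintro c c' rfl x hx hx'; rfl
  let f : ↥(boundary G) → ↥(boundary G) :=
    fun x => g ((srGraph G).connectedComponentMk x) ⟨x, hmem x⟩
  have hfadj : ∀ x, (srGraph G).Adj x (f x) :=
    fun x => hσ ((srGraph G).connectedComponentMk x) ⟨x, hmem x⟩
  have hinj : Function.Injective f := by
    intro x y hxy
    have hcxy : (srGraph G).connectedComponentMk x = (srGraph G).connectedComponentMk y := by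
      have h1 := SimpleGraph.ConnectedComponent.sound (hfadj x).reachable
      have h2 := SimpleGraph.ConnectedComponent.sound (hfadj y).reachable
      rw [h1, h2, hxy]
    have h3 : y ∈ ((srGraph G).connectedComponentMk x).supp := by
      rw [SimpleGraph.ConnectedComponent.mem_supp_iff]; exact hcxy.symm
    have h4 : f y = g ((srGraph G).connectedComponentMk x) ⟨y, h3⟩ :=
      hg _ _ hcxy.symm y (hmem y) h3
    have h5 : g ((srGraph G).connectedComponentMk x) ⟨x, hmem x⟩
        = g ((srGraph G).connectedComponentMk x) ⟨y, h3⟩ := by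
      rw [← h4]; exact hxy
    have h6 := (σ ((srGraph G).connectedComponentMk x)).injective
      (Subtype.val_injective h5)
    exact congrArg Subtype.val h6
  exact ⟨Equiv.ofBijective f (Finite.injective_iff_bijective.mp hinj),
    fun x => (hfadj x).2⟩

end AuxSR4
theorem stmt13 {α β : Type*} [Fintype α] [Fintype β]
    (G : SimpleGraph α) (H : SimpleGraph β)
    (hG : G.Connected) (hH : H.Connected)
    (hHbip : (srGraph H).Colorable 2)
    (hHpm : ∃ M : (srGraph H).Subgraph, M.IsPerfectMatching)
    (hcomp : ∀ c : (srGraph G).ConnectedComponent,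
      ((srGraph G).induce c.supp).IsHamiltonian ∨
        ∃ M : ((srGraph G).induce c.supp).Subgraph, M.IsPerfectMatching) :
    (srGraph (G □ H)).Colorable 2 ∧
      ∃ M : (srGraph (G □ H)).Subgraph, M.IsPerfectMatching := by
  classical
  obtain ⟨MH, hMH⟩ := hHpm
  obtain ⟨m, hminv, hmadj⟩ := aux_pm_invol hMH
  obtain ⟨col⟩ := hHbip
  obtain ⟨φ, hφ⟩ := aux_G_perm G hG hcomp
  have hchar : ∀ x : α × β, x ∈ boundary (G □ H) ↔ x.1 ∈ boundary G ∧ x.2 ∈ boundary H :=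
    fun x => aux_boundary_boxProd hG hH x
  have hHnb : ∀ b : β, ∃ w, H.Adj b w := by
    intro b
    by_contra hno
    push_neg at hno
    have hall : ∀ y : β, y = b := by
      intro y
      obtain ⟨p⟩ := hH.preconnected b y
      cases p with
      | nil => rfl
      | cons h _ => exact absurd h (hno _)
    have hbb : b ∈ boundary H := ⟨b, fun w hw => absurd hw (hno w)⟩
    have hadj := hmadj ⟨b, hbb⟩
    exact hadj.1 (hall _).symm
  have hHnotself : ∀ b : β, ¬ MaxDistant H b b := by
    intro b hbmd
    obtain ⟨w, hw⟩ := hHnb b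
    have h1 := hbmd w hw
    rw [SimpleGraph.dist_self] at h1
    have h2 := hH.pos_dist_of_ne hw.ne
    omega
  let bA : ↥(boundary (G □ H)) → ↥(boundary G) :=
    fun x => ⟨x.val.1, ((hchar x.val).mp x.2).1⟩
  let bB : ↥(boundary (G □ H)) → ↥(boundary H) :=
    fun x => ⟨x.val.2, ((hchar x.val).mp x.2).2⟩
  let F : ↥(boundary (G □ H)) → ↥(boundary (G □ H)) := fun x =>
    ⟨(↑(if col (bB x) = 0 then φ (bA x) else φ.symm (bA x)), ↑(m (bB x))),
      (hchar _).mpr ⟨(if col (bB x) = 0 then φ (bA x) else φ.symm (bA x)).2, (m (bB x)).2⟩⟩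
  have hbA_F : ∀ x, bA (F x) = (if col (bB x) = 0 then φ (bA x) else φ.symm (bA x)) :=
    fun x => Subtype.ext rfl
  have hbB_F : ∀ x, bB (F x) = m (bB x) := fun x => Subtype.ext rfl
  have hcolne : ∀ b : ↥(boundary H), col (m b) ≠ col b := fun b => (col.valid (hmadj b)).symm
  have hfin2 : ∀ i j : Fin 2, i ≠ j → i ≠ 0 → j = 0 := by decide
  have hFinvol : ∀ x, F (F x) = x := by
    intro x
    apply Subtype.ext
    have h2 : bB (F x) = m (bB x) := hbB_F x
    have hsnd : ((m (bB (F x)) : ↥(boundary H)) : β) = x.val.2 := by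
      rw [h2, hminv]
    by_cases h0 : col (bB x) = 0
    · have hc : ¬ col (bB (F x)) = 0 := by
        rw [h2]
        exact fun hh => hcolne (bB x) (hh.trans h0.symm)
      have hfst : ((if col (bB (F x)) = 0 then φ (bA (F x)) else φ.symm (bA (F x)) :
          ↥(boundary G)) : α) = x.val.1 := by
        rw [if_neg hc, hbA_F x, if_pos h0, Equiv.symm_apply_apply]
      exact Prod.ext hfst hsnd
    · have hc : col (bB (F x)) = 0 := by
        rw [h2]
        exact hfin2 _ _ (hcolne (bB x)).symm h0
      have hfst : ((if col (bB (F x)) = 0 then φ (bA (F x)) else φ.symm (bA (F x)) :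
          ↥(boundary G)) : α) = x.val.1 := by
        rw [if_pos hc, hbA_F x, if_neg h0, Equiv.apply_symm_apply]
      exact Prod.ext hfst hsnd
  have hFadj : ∀ x, (srGraph (G □ H)).Adj x (F x) := by
    intro x
    refine ⟨fun hh => (hmadj (bB x)).1 (congrArg Prod.snd hh), ?_⟩
    refine (aux_mmd_boxProd hG hH).mpr ⟨?_, (hmadj (bB x)).2⟩
    by_cases h0 : col (bB x) = 0
    · rw [if_pos h0]
      exact hφ (bA x)
    · rw [if_neg h0]
      have h := hφ (φ.symm (bA x))
      rw [Equiv.apply_symm_apply] at h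
      exact ⟨h.2, h.1⟩
  constructor
  · refine ⟨SimpleGraph.Coloring.mk (fun x => col (bB x)) ?_⟩
    intro x y hxy
    have hmmdH : MMD H x.val.2 y.val.2 := ((aux_mmd_boxProd hG hH).mp hxy.2).2
    by_cases hbd : x.val.2 = y.val.2
    · exfalso
      rw [← hbd] at hmmdH
      exact hHnotself x.val.2 hmmdH.1
    · exact col.valid (⟨hbd, hmmdH⟩ : (srGraph H).Adj (bB x) (bB y))
  · refine ⟨{ verts := Set.univ
              Adj := fun x y => y = F x ∨ x = F y
              adj_sub := ?_
              edge_vert := fun _ => Set.mem_univ _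
              symm := ⟨fun x y h => Or.symm h⟩ }, ?_, fun v => Set.mem_univ _⟩
    · rintro v w (rfl | rfl)
      · exact hFadj v
      · exact (hFadj w).symm
    · intro v _
      exact ⟨F v, Or.inl rfl,
        fun w hw => hw.elim (fun h => h) (fun hv => by rw [hv, hFinvol])⟩
end

section
/- For all integers r, t ≥ 3, the strong resolving graph of the direct product K_r × K_t is isomorphic to the Cartesian product K_r □ K_t; that is, (K_r × K_t)_SR ≅ K_r □ K_t. -/
open SimpleGraph

variable {V : Type*}

section Stmt14Aux

lemma exists_third {n : ℕ} (hn : 3 ≤ n) (a b : Fin n) : ∃ c : Fin n, c ≠ a ∧ c ≠ b := by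
  have hcard : (({a, b} : Finset (Fin n))ᶜ).Nonempty := by
    rw [← Finset.card_pos, Finset.card_compl]
    have : ({a, b} : Finset (Fin n)).card ≤ 2 := (Finset.card_insert_le _ _).trans (by simp)
    simp only [Fintype.card_fin]; omega
  obtain ⟨c, hc⟩ := hcard
  simp only [Finset.mem_compl, Finset.mem_insert, Finset.mem_singleton, not_or] at hc
  exact ⟨c, hc.1, hc.2⟩

variable {r t : ℕ}

private abbrev Gd (r t : ℕ) : SimpleGraph (Fin r × Fin t) :=
  DirectProd (⊤ : SimpleGraph (Fin r)) (⊤ : SimpleGraph (Fin t))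

lemma Gd_adj (x y : Fin r × Fin t) : (Gd r t).Adj x y ↔ x.1 ≠ y.1 ∧ x.2 ≠ y.2 := by
  simp [DirectProd, Gd]

lemma Gd_dist_le_two (hr : 3 ≤ r) (ht : 3 ≤ t) (x y : Fin r × Fin t) :
    (Gd r t).dist x y ≤ 2 := by
  by_cases hxy : x = y
  · simp [hxy, SimpleGraph.dist_self]
  by_cases hadj : (Gd r t).Adj x y
  · exact (SimpleGraph.dist_le hadj.toWalk).trans (by simp)
  · obtain ⟨c, hc1, hc2⟩ := exists_third hr x.1 y.1
    obtain ⟨e, he1, he2⟩ := exists_third ht x.2 y.2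
    have h1 : (Gd r t).Adj x (c, e) := (Gd_adj _ _).2 ⟨fun h => hc1 h.symm, fun h => he1 h.symm⟩
    have h2 : (Gd r t).Adj (c, e) y := (Gd_adj _ _).2 ⟨hc2, he2⟩
    have := SimpleGraph.dist_le (SimpleGraph.Walk.cons h1 h2.toWalk)
    simpa using this

lemma Gd_dist_eq_two (hr : 3 ≤ r) (ht : 3 ≤ t) {x y : Fin r × Fin t}
    (hxy : x ≠ y) (hadj : ¬ (Gd r t).Adj x y) : (Gd r t).dist x y = 2 := by
  obtain ⟨c, hc1, hc2⟩ := exists_third hr x.1 y.1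
  obtain ⟨e, he1, he2⟩ := exists_third ht x.2 y.2
  have h1 : (Gd r t).Adj x (c, e) := (Gd_adj _ _).2 ⟨fun h => hc1 h.symm, fun h => he1 h.symm⟩
  have h2 : (Gd r t).Adj (c, e) y := (Gd_adj _ _).2 ⟨hc2, he2⟩
  have hreach : (Gd r t).Reachable x y := ⟨SimpleGraph.Walk.cons h1 h2.toWalk⟩
  have hle := Gd_dist_le_two hr ht x y
  have hpos := hreach.pos_dist_of_ne hxy
  have hne1 : (Gd r t).dist x y ≠ 1 := fun h =>
    hadj (SimpleGraph.dist_eq_one_iff_adj.mp h)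
  omega

lemma Gd_maxDistant_of_dist_two (hr : 3 ≤ r) (ht : 3 ≤ t) {x v : Fin r × Fin t}
    (h : (Gd r t).dist v x = 2) : MaxDistant (Gd r t) x v := by
  intro w _
  rw [h]
  exact Gd_dist_le_two hr ht v w

lemma Gd_not_maxDistant_of_adj (hr : 3 ≤ r) (ht : 3 ≤ t) {x y : Fin r × Fin t}
    (hadj : (Gd r t).Adj x y) : ¬ MaxDistant (Gd r t) x y := by
  intro hmd
  obtain ⟨e, he1, he2⟩ := exists_third ht x.2 y.2
  have hxy1 : x.1 ≠ y.1 := ((Gd_adj _ _).1 hadj).1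
  have hw : (Gd r t).Adj x (y.1, e) := (Gd_adj _ _).2 ⟨hxy1, fun h => he1 h.symm⟩
  have hywne : y ≠ (y.1, e) := fun h => he2 (congrArg Prod.snd h).symm
  have hywnadj : ¬ (Gd r t).Adj y (y.1, e) := fun h => ((Gd_adj _ _).1 h).1 rfl
  have h2 : (Gd r t).dist y (y.1, e) = 2 := Gd_dist_eq_two hr ht hywne hywnadj
  have h1 : (Gd r t).dist y x = 1 := SimpleGraph.dist_eq_one_iff_adj.mpr hadj.symm
  have := hmd (y.1, e) hw
  rw [h1, h2] at this
  omega

lemma Gd_srI_adj (hr : 3 ≤ r) (ht : 3 ≤ t) (x y : Fin r × Fin t) :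
    (srGraphI (Gd r t)).Adj x y ↔
      ((⊤ : SimpleGraph (Fin r)) □ (⊤ : SimpleGraph (Fin t))).Adj x y := by
  rw [SimpleGraph.boxProd_adj]
  constructor
  · rintro ⟨hne, hmmd⟩
    have hnadj : ¬ (Gd r t).Adj x y := fun hadj =>
      Gd_not_maxDistant_of_adj hr ht hadj hmmd.1
    rw [Gd_adj] at hnadj
    push_neg at hnadj
    by_cases h1 : x.1 = y.1
    · exact Or.inr ⟨fun h => hne (Prod.ext h1 h), h1⟩
    · exact Or.inl ⟨h1, hnadj h1⟩
  · intro h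
    have hne : x ≠ y := by
      rcases h with ⟨h1, _⟩ | ⟨h2, _⟩
      · exact fun he => h1 (congrArg Prod.fst he)
      · exact fun he => h2 (congrArg Prod.snd he)
    have hnadj : ¬ (Gd r t).Adj x y := by
      rw [Gd_adj]
      rcases h with ⟨_, h2⟩ | ⟨_, h1⟩
      · exact fun hc => hc.2 h2
      · exact fun hc => hc.1 h1
    have hd : (Gd r t).dist x y = 2 := Gd_dist_eq_two hr ht hne hnadj
    have hd' : (Gd r t).dist y x = 2 := by rwa [SimpleGraph.dist_comm]
    exact ⟨hne, Gd_maxDistant_of_dist_two hr ht hd',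
      Gd_maxDistant_of_dist_two hr ht hd⟩

lemma Gd_boundary (hr : 3 ≤ r) (ht : 3 ≤ t) (x : Fin r × Fin t) :
    x ∈ boundary (Gd r t) := by
  obtain ⟨e, he1, _⟩ := exists_third ht x.2 x.2
  refine ⟨(x.1, e), Gd_maxDistant_of_dist_two hr ht ?_⟩
  refine Gd_dist_eq_two hr ht (fun h => he1 (congrArg Prod.snd h)) ?_
  exact fun h => ((Gd_adj _ _).1 h).1 rfl

end Stmt14Aux

theorem stmt14 (r t : ℕ) (hr : 3 ≤ r) (ht : 3 ≤ t) :
    Nonempty (srGraph (DirectProd (⊤ : SimpleGraph (Fin r)) (⊤ : SimpleGraph (Fin t)))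
      ≃g (⊤ : SimpleGraph (Fin r)) □ (⊤ : SimpleGraph (Fin t))) := by
  refine ⟨⟨Equiv.subtypeUnivEquiv (Gd_boundary hr ht), ?_⟩⟩
  rintro ⟨a, ha⟩ ⟨b, hb⟩
  simp only [Equiv.subtypeUnivEquiv_apply]
  exact (Gd_srI_adj hr ht a b).symm
end

section
/- Let G be a finite nonbipartite triangle-free graph of order n ≥ 2 such that every pair of vertices of G lies on a common cycle of length five (G is C5-connected), and let k, ℓ be positive integers with max{k,ℓ} ≥ 2. Then the strong resolving graph (G × K_{k,ℓ})_SR is isomorphic to the disjoint union of n copies of the complete graph K_{k+ℓ}; equivalently, two distinct vertices (g,u) and (g',u') of G × K_{k,ℓ} are mutually maximally distant if and only if g = g'. -/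
open SimpleGraph

variable {V : Type*}

section AuxLemmas

open SimpleGraph

variable {W α β : Type*}

lemma aux_adj_of_walk1 {Γ : SimpleGraph W} {a b : W} (p : Γ.Walk a b) (h : p.length = 1) :
    Γ.Adj a b := by
  cases p with
  | nil => simp at h
  | cons h' q =>
    have hq : q.length = 0 := by simpa using h
    exact (SimpleGraph.Walk.eq_of_length_eq_zero hq) ▸ h'

lemma aux_walk2 {Γ : SimpleGraph W} {a b : W} (p : Γ.Walk a b) (h : p.length = 2) :
    ∃ c, Γ.Adj a c ∧ Γ.Adj c b := by
  cases p with
  | nil => simp at h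
  | cons h' q => exact ⟨_, h', aux_adj_of_walk1 q (by simpa using h)⟩

lemma aux_walk3 {Γ : SimpleGraph W} {a b : W} (p : Γ.Walk a b) (h : p.length = 3) :
    ∃ c d, Γ.Adj a c ∧ Γ.Adj c d ∧ Γ.Adj d b := by
  cases p with
  | nil => simp at h
  | cons h' q =>
    obtain ⟨d, h1, h2⟩ := aux_walk2 q (by simpa using h)
    exact ⟨_, d, h', h1, h2⟩

lemma aux_pump {Γ : SimpleGraph W} (hn : ∀ w : W, ∃ x, Γ.Adj w x) {a b : W}
    (p : Γ.Walk a b) (m : ℕ) (h1 : p.length ≤ m) (h2 : m % 2 = p.length % 2) :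
    ∃ q : Γ.Walk a b, q.length = m := by
  obtain ⟨n, rfl⟩ : ∃ n, m = p.length + 2 * n := ⟨(m - p.length) / 2, by omega⟩
  clear h1 h2
  induction n with
  | zero => exact ⟨p, by simp⟩
  | succ n ih =>
    obtain ⟨q, hq⟩ := ih
    obtain ⟨x, hx⟩ := hn b
    refine ⟨q.append (SimpleGraph.Walk.cons hx (SimpleGraph.Walk.cons hx.symm SimpleGraph.Walk.nil)), ?_⟩
    simp [SimpleGraph.Walk.length_append, hq]
    ring

lemma aux_proj {G : SimpleGraph α} {H : SimpleGraph β} {x y : α × β}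
    (p : (DirectProd G H).Walk x y) :
    ∃ (q : G.Walk x.1 y.1) (r : H.Walk x.2 y.2), q.length = p.length ∧ r.length = p.length := by
  induction p with
  | nil => exact ⟨SimpleGraph.Walk.nil, SimpleGraph.Walk.nil, rfl, rfl⟩
  | cons h p ih =>
    obtain ⟨q, r, hq, hr⟩ := ih
    exact ⟨SimpleGraph.Walk.cons h.1 q, SimpleGraph.Walk.cons h.2 r, by simp [hq], by simp [hr]⟩

lemma aux_zip {G : SimpleGraph α} {H : SimpleGraph β} {g g' : α} {u u' : β}
    (p : G.Walk g g') (q : H.Walk u u') (h : p.length = q.length) :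
    ∃ r : (DirectProd G H).Walk (g, u) (g', u'), r.length = p.length := by
  induction p generalizing u with
  | nil =>
    have hq : u = u' := SimpleGraph.Walk.eq_of_length_eq_zero (by simpa using h.symm)
    subst hq
    exact ⟨SimpleGraph.Walk.nil, rfl⟩
  | cons hadj p ih =>
    cases q with
    | nil => simp at h
    | cons hadj2 q2 =>
      obtain ⟨r, hr⟩ := ih q2 (by simpa using h)
      exact ⟨SimpleGraph.Walk.cons (show (DirectProd G H).Adj _ _ from ⟨hadj, hadj2⟩) r, by simp [hr]⟩

lemma aux_dist_le {Γ : SimpleGraph W} {x y : W} {m : ℕ} (p : Γ.Walk x y) (h : p.length = m) :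
    Γ.dist x y ≤ m := h ▸ SimpleGraph.dist_le p

lemma aux_dist_lower {Γ : SimpleGraph W} {x y : W} {m : ℕ} (r : Γ.Walk x y)
    (h : ∀ q : Γ.Walk x y, m ≤ q.length) : m ≤ Γ.dist x y := by
  obtain ⟨q, hq⟩ := (r.reachable).exists_walk_length_eq_dist
  rw [← hq]
  exact h q

lemma aux_dist_eq {Γ : SimpleGraph W} {x y : W} {m : ℕ} (p : Γ.Walk x y) (hp : p.length = m)
    (h : ∀ q : Γ.Walk x y, m ≤ q.length) : Γ.dist x y = m :=
  le_antisymm (aux_dist_le p hp) (aux_dist_lower p h)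

end AuxLemmas
section AuxCBG

open SimpleGraph

lemma cbg_adj {k l : ℕ} {u v : Fin k ⊕ Fin l} :
    (completeBipartiteGraph (Fin k) (Fin l)).Adj u v ↔ u.isLeft ≠ v.isLeft := by
  cases u <;> cases v <;> simp

lemma cbg_parity {k l : ℕ} {u v : Fin k ⊕ Fin l}
    (q : (completeBipartiteGraph (Fin k) (Fin l)).Walk u v) :
    q.length % 2 = 0 ↔ u.isLeft = v.isLeft := by
  induction q with
  | nil => simp
  | @cons a b c h q ih =>
    have hab : a.isLeft ≠ b.isLeft := cbg_adj.mp h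
    have hbc : (a.isLeft = c.isLeft) ↔ ¬ (b.isLeft = c.isLeft) := by
      revert hab
      cases a.isLeft <;> cases b.isLeft <;> cases c.isLeft <;> simp
    rw [SimpleGraph.Walk.length_cons, hbc, ← ih]
    omega

lemma cbg_opp {k l : ℕ} (hk : 1 ≤ k) (hl : 1 ≤ l) (u : Fin k ⊕ Fin l) :
    ∃ x : Fin k ⊕ Fin l, x.isLeft ≠ u.isLeft := by
  cases u with
  | inl a => exact ⟨Sum.inr ⟨0, hl⟩, by simp⟩
  | inr a => exact ⟨Sum.inl ⟨0, hk⟩, by simp⟩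

lemma cbg_nbr {k l : ℕ} (hk : 1 ≤ k) (hl : 1 ≤ l) (u : Fin k ⊕ Fin l) :
    ∃ x, (completeBipartiteGraph (Fin k) (Fin l)).Adj u x := by
  obtain ⟨x, hx⟩ := cbg_opp hk hl u
  exact ⟨x, cbg_adj.mpr (Ne.symm hx)⟩

lemma cbg_walk_odd {k l : ℕ} (hk : 1 ≤ k) (hl : 1 ≤ l) {u v : Fin k ⊕ Fin l}
    (hs : u.isLeft ≠ v.isLeft) (m : ℕ) (hm : m % 2 = 1) :
    ∃ q : (completeBipartiteGraph (Fin k) (Fin l)).Walk u v, q.length = m :=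
  aux_pump (cbg_nbr hk hl) (SimpleGraph.Walk.cons (cbg_adj.mpr hs) SimpleGraph.Walk.nil) m
    (by simp; omega) (by simp [hm])

lemma cbg_walk_even {k l : ℕ} (hk : 1 ≤ k) (hl : 1 ≤ l) {u v : Fin k ⊕ Fin l}
    (hs : u.isLeft = v.isLeft) (m : ℕ) (hm : m % 2 = 0) (h2 : u = v ∨ 2 ≤ m) :
    ∃ q : (completeBipartiteGraph (Fin k) (Fin l)).Walk u v, q.length = m := by
  rcases eq_or_ne u v with rfl | hne
  · exact aux_pump (cbg_nbr hk hl) SimpleGraph.Walk.nil m (by simp) (by simp [hm])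
  · have h2' : 2 ≤ m := h2.resolve_left hne
    obtain ⟨x, hx⟩ := cbg_opp hk hl u
    have a1 : (completeBipartiteGraph (Fin k) (Fin l)).Adj u x := cbg_adj.mpr (Ne.symm hx)
    have a2 : (completeBipartiteGraph (Fin k) (Fin l)).Adj x v := cbg_adj.mpr (by rw [← hs]; exact hx)
    exact aux_pump (cbg_nbr hk hl) (SimpleGraph.Walk.cons a1 (SimpleGraph.Walk.cons a2 SimpleGraph.Walk.nil)) m
      (by simp; omega) (by simp [hm])

end AuxCBG

section AuxG

open SimpleGraph

variable {V : Type*} {G : SimpleGraph V}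

lemma aux_tri (htf : G.CliqueFree 3) {a b c : V}
    (h1 : G.Adj a b) (h2 : G.Adj b c) (h3 : G.Adj c a) : False := by
  classical
  exact htf {a, b, c} (SimpleGraph.is3Clique_triple_iff.mpr ⟨h1, h3.symm, h2⟩)

lemma aux_no_closed1 {g : V} (p : G.Walk g g) (h : p.length = 1) : False :=
  G.loopless.irrefl g (aux_adj_of_walk1 p h)

lemma aux_no_closed3 (htf : G.CliqueFree 3) {g : V} (p : G.Walk g g) (h : p.length = 3) : False := by
  obtain ⟨c, d, h1, h2, h3⟩ := aux_walk3 p h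
  exact aux_tri htf h1 h2 h3

lemma aux_no_adj_walk2 (htf : G.CliqueFree 3) {g g' : V} (hadj : G.Adj g g')
    (p : G.Walk g g') (h : p.length = 2) : False := by
  obtain ⟨c, h1, h2⟩ := aux_walk2 p h
  exact aux_tri htf h1 h2 hadj.symm

lemma aux_cyc (hc5 : C5Connected G) (u v : V) :
    ∃ (p : G.Walk u v) (q : G.Walk v u), p.length + q.length = 5 := by
  classical
  obtain ⟨w, c, hcyc, hlen, hu, hv⟩ := hc5 u v
  have htail : ∀ x, x ∈ c.support → x ∈ c.support.tail := by
    intro x hx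
    cases c with
    | nil => simp at hlen
    | cons h p =>
      rw [SimpleGraph.Walk.support_cons] at hx ⊢
      simp only [List.tail_cons]
      rcases List.mem_cons.mp hx with rfl | hx'
      · exact SimpleGraph.Walk.end_mem_support p
      · exact hx'
  have hlen' : (c.rotate u hu).length = 5 := by
    have h1 := congrArg SimpleGraph.Walk.length (c.take_spec hu)
    rw [SimpleGraph.Walk.length_append] at h1
    have hrot : (c.rotate u hu) = (c.dropUntil u hu).append (c.takeUntil u hu) := rfl
    rw [hrot, SimpleGraph.Walk.length_append]
    omega
  have hv' : v ∈ (c.rotate u hu).support := by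
    have h2 : v ∈ c.support.tail := htail v hv
    have h3 := SimpleGraph.Walk.support_rotate c u hu
    have h4 : v ∈ (c.rotate u hu).support.tail := h3.mem_iff.mpr h2
    exact List.mem_of_mem_tail h4
  refine ⟨(c.rotate u hu).takeUntil v hv', (c.rotate u hu).dropUntil v hv', ?_⟩
  have h5 := congrArg SimpleGraph.Walk.length ((c.rotate u hu).take_spec hv')
  rw [SimpleGraph.Walk.length_append] at h5
  omega

lemma g_closed5 (hc5 : C5Connected G) (g : V) : ∃ p : G.Walk g g, p.length = 5 := by
  obtain ⟨p, q, h⟩ := aux_cyc hc5 g g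
  exact ⟨p.append q, by rw [SimpleGraph.Walk.length_append]; omega⟩

lemma g_nbr (hc5 : C5Connected G) (g : V) : ∃ w, G.Adj g w := by
  obtain ⟨p, hp⟩ := g_closed5 hc5 g
  cases p with
  | nil => simp at hp
  | cons h q => exact ⟨_, h⟩

lemma g_walk_le2 (hc5 : C5Connected G) (u v : V) : ∃ p : G.Walk u v, p.length ≤ 2 := by
  obtain ⟨p, q, h⟩ := aux_cyc hc5 u v
  rcases le_or_gt p.length 2 with h2 | h2
  · exact ⟨p, h2⟩
  · exact ⟨q.reverse, by rw [SimpleGraph.Walk.length_reverse]; omega⟩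

lemma g_adj_walk4 (htf : G.CliqueFree 3) (hc5 : C5Connected G) {g g' : V} (hadj : G.Adj g g') :
    ∃ (w : V) (r : G.Walk w g'), G.Adj g w ∧ w ≠ g' ∧ r.length = 3 := by
  obtain ⟨p, q, h⟩ := aux_cyc hc5 g g'
  have hp0 : p.length ≠ 0 := fun h0 => hadj.ne (SimpleGraph.Walk.eq_of_length_eq_zero h0)
  have hq0 : q.length ≠ 0 := fun h0 => hadj.ne (SimpleGraph.Walk.eq_of_length_eq_zero h0).symm
  have hp2 : p.length ≠ 2 := fun h2 => aux_no_adj_walk2 htf hadj p h2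
  have hq2 : q.length ≠ 2 := fun h2 => aux_no_adj_walk2 htf hadj.symm q h2
  have hp1 : p.length ≠ 3 := by
    intro h3
    have : q.length = 2 := by omega
    exact hq2 this
  have h4 : ∃ r : G.Walk g g', r.length = 4 := by
    rcases eq_or_ne p.length 4 with h4 | h4
    · exact ⟨p, h4⟩
    · refine ⟨q.reverse, ?_⟩
      rw [SimpleGraph.Walk.length_reverse]
      omega
  obtain ⟨r4, hr4⟩ := h4
  cases r4 with
  | nil => simp at hr4
  | cons hgw r =>
    refine ⟨_, r, hgw, ?_, by simpa using hr4⟩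
    rintro rfl
    exact aux_no_closed3 htf r (by simpa using hr4)

lemma g_dist2_data (htf : G.CliqueFree 3) (hc5 : C5Connected G) {g g' : V}
    (hne : g ≠ g') (hnadj : ¬ G.Adj g g') :
    (∃ m, G.Adj g m ∧ G.Adj m g') ∧
    (∃ c, G.Adj g c ∧ c ≠ g' ∧ ¬ G.Adj c g') ∧
    (∃ r : G.Walk g g', r.length = 3) := by
  obtain ⟨p, q, h⟩ := aux_cyc hc5 g g'
  have hp0 : p.length ≠ 0 := fun h0 => hne (SimpleGraph.Walk.eq_of_length_eq_zero h0)
  have hq0 : q.length ≠ 0 := fun h0 => hne (SimpleGraph.Walk.eq_of_length_eq_zero h0).symm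
  have hp1 : p.length ≠ 1 := fun h1 => hnadj (aux_adj_of_walk1 p h1)
  have hq1 : q.length ≠ 1 := fun h1 => hnadj ((aux_adj_of_walk1 q h1).symm)
  have h2 : ∃ r : G.Walk g g', r.length = 2 := by
    rcases eq_or_ne p.length 2 with h2 | h2
    · exact ⟨p, h2⟩
    · exact ⟨q.reverse, by rw [SimpleGraph.Walk.length_reverse]; omega⟩
  have h3 : ∃ r : G.Walk g g', r.length = 3 := by
    rcases eq_or_ne p.length 3 with h3 | h3
    · exact ⟨p, h3⟩
    · exact ⟨q.reverse, by rw [SimpleGraph.Walk.length_reverse]; omega⟩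
  obtain ⟨r2, hr2⟩ := h2
  obtain ⟨r3, hr3⟩ := h3
  obtain ⟨m, hm1, hm2⟩ := aux_walk2 r2 hr2
  obtain ⟨cc, d, hd1, hd2, hd3⟩ := aux_walk3 r3 hr3
  refine ⟨⟨m, hm1, hm2⟩, ⟨cc, hd1, ?_, ?_⟩, ⟨r3, hr3⟩⟩
  · rintro rfl
    exact hnadj hd1
  · intro hcg
    exact aux_tri htf hd2 hd3 hcg.symm

end AuxG
section AuxProd

open SimpleGraph

variable {V : Type*} {G : SimpleGraph V} {k l : ℕ}

local notation "HB" => completeBipartiteGraph (Fin k) (Fin l)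
local notation "PP" => DirectProd G (completeBipartiteGraph (Fin k) (Fin l))

lemma pd_parity {x y : V × (Fin k ⊕ Fin l)} (r : (PP).Walk x y) :
    r.length % 2 = 0 ↔ x.2.isLeft = y.2.isLeft := by
  obtain ⟨qG, qH, hG, hH⟩ := aux_proj r
  rw [← hH]
  exact cbg_parity qH

/-- g = g', u ≠ u', same side : dist = 2 -/
lemma pd1 (hc5 : C5Connected G) (hk : 1 ≤ k) (hl : 1 ≤ l) {g : V} {u u' : Fin k ⊕ Fin l}
    (hne : u ≠ u') (hs : u.isLeft = u'.isLeft) :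
    (PP).dist (g, u) (g, u') = 2 := by
  obtain ⟨w, hw⟩ := g_nbr hc5 g
  have pG : ∃ p : G.Walk g g, p.length = 2 :=
    ⟨SimpleGraph.Walk.cons hw (SimpleGraph.Walk.cons hw.symm SimpleGraph.Walk.nil), by simp⟩
  obtain ⟨p, hp⟩ := pG
  obtain ⟨q, hq⟩ := cbg_walk_even hk hl hs 2 (by norm_num) (Or.inr le_rfl)
  obtain ⟨r, hr⟩ := aux_zip p q (by omega)
  refine aux_dist_eq r (by omega) ?_
  intro q'
  have hpar : q'.length % 2 = 0 := (pd_parity q').mpr hs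
  have h0 : q'.length ≠ 0 := by
    intro h0
    have := SimpleGraph.Walk.eq_of_length_eq_zero h0
    exact hne (congrArg Prod.snd this)
  omega

/-- g = g', different sides : dist = 5 -/
lemma pd2 (htf : G.CliqueFree 3) (hc5 : C5Connected G) (hk : 1 ≤ k) (hl : 1 ≤ l)
    {g : V} {u u' : Fin k ⊕ Fin l} (hs : u.isLeft ≠ u'.isLeft) :
    (PP).dist (g, u) (g, u') = 5 := by
  obtain ⟨p, hp⟩ := g_closed5 hc5 g
  obtain ⟨q, hq⟩ := cbg_walk_odd hk hl hs 5 (by norm_num)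
  obtain ⟨r, hr⟩ := aux_zip p q (by omega)
  refine aux_dist_eq r (by omega) ?_
  intro q'
  obtain ⟨qG, qH, hG, hH⟩ := aux_proj q'
  have hpar : q'.length % 2 = 1 := by
    have hx := (pd_parity q').not.mpr hs
    omega
  have h1 : q'.length ≠ 1 := fun h1 => aux_no_closed1 qG (by omega)
  have h3 : q'.length ≠ 3 := fun h3 => aux_no_closed3 htf qG (by omega)
  omega

/-- adjacent, different sides : dist = 1 -/
lemma pd3 {g g' : V} {u u' : Fin k ⊕ Fin l} (hadj : G.Adj g g') (hs : u.isLeft ≠ u'.isLeft) :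
    (PP).dist (g, u) (g', u') = 1 :=
  SimpleGraph.dist_eq_one_iff_adj.mpr ⟨hadj, cbg_adj.mpr hs⟩

/-- adjacent, same side : dist = 4 -/
lemma pd4 (htf : G.CliqueFree 3) (hc5 : C5Connected G) (hk : 1 ≤ k) (hl : 1 ≤ l)
    {g g' : V} {u u' : Fin k ⊕ Fin l} (hadj : G.Adj g g') (hs : u.isLeft = u'.isLeft) :
    (PP).dist (g, u) (g', u') = 4 := by
  obtain ⟨w, r3, hgw, hwne, hr3⟩ := g_adj_walk4 htf hc5 hadj
  have pG : ∃ p : G.Walk g g', p.length = 4 := ⟨SimpleGraph.Walk.cons hgw r3, by simp [hr3]⟩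
  obtain ⟨p, hp⟩ := pG
  obtain ⟨q, hq⟩ := cbg_walk_even hk hl hs 4 (by norm_num) (Or.inr (by norm_num))
  obtain ⟨r, hr⟩ := aux_zip p q (by omega)
  refine aux_dist_eq r (by omega) ?_
  intro q'
  obtain ⟨qG, qH, hG, hH⟩ := aux_proj q'
  have hpar : q'.length % 2 = 0 := (pd_parity q').mpr hs
  have h0 : q'.length ≠ 0 := by
    intro h0
    exact hadj.ne (congrArg Prod.fst (SimpleGraph.Walk.eq_of_length_eq_zero h0))
  have h2 : q'.length ≠ 2 := fun h2 => aux_no_adj_walk2 htf hadj qG (by omega)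
  omega

/-- not adjacent, distinct, different sides : dist = 3 -/
lemma pd5 (htf : G.CliqueFree 3) (hc5 : C5Connected G) (hk : 1 ≤ k) (hl : 1 ≤ l)
    {g g' : V} {u u' : Fin k ⊕ Fin l} (hne : g ≠ g') (hnadj : ¬ G.Adj g g')
    (hs : u.isLeft ≠ u'.isLeft) :
    (PP).dist (g, u) (g', u') = 3 := by
  obtain ⟨_, _, p, hp⟩ := g_dist2_data htf hc5 hne hnadj
  obtain ⟨q, hq⟩ := cbg_walk_odd hk hl hs 3 (by norm_num)
  obtain ⟨r, hr⟩ := aux_zip p q (by omega)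
  refine aux_dist_eq r (by omega) ?_
  intro q'
  have hpar : q'.length % 2 = 1 := by
    have hx := (pd_parity q').not.mpr hs
    omega
  have h1 : q'.length ≠ 1 := fun h1 => hnadj (aux_adj_of_walk1 q' h1).1
  omega

/-- not adjacent, distinct, same side : dist = 2 -/
lemma pd6 (htf : G.CliqueFree 3) (hc5 : C5Connected G) (hk : 1 ≤ k) (hl : 1 ≤ l)
    {g g' : V} {u u' : Fin k ⊕ Fin l} (hne : g ≠ g') (hnadj : ¬ G.Adj g g')
    (hs : u.isLeft = u'.isLeft) :
    (PP).dist (g, u) (g', u') = 2 := by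
  obtain ⟨⟨m, hm1, hm2⟩, _, _⟩ := g_dist2_data htf hc5 hne hnadj
  have pG : ∃ p : G.Walk g g', p.length = 2 :=
    ⟨SimpleGraph.Walk.cons hm1 (SimpleGraph.Walk.cons hm2 SimpleGraph.Walk.nil), by simp⟩
  obtain ⟨p, hp⟩ := pG
  obtain ⟨q, hq⟩ := cbg_walk_even hk hl hs 2 (by norm_num) (Or.inr le_rfl)
  obtain ⟨r, hr⟩ := aux_zip p q (by omega)
  refine aux_dist_eq r (by omega) ?_
  intro q'
  have hpar : q'.length % 2 = 0 := (pd_parity q').mpr hs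
  have h0 : q'.length ≠ 0 := by
    intro h0
    exact hne (congrArg Prod.fst (SimpleGraph.Walk.eq_of_length_eq_zero h0))
  omega

/-- there is always a walk of length at most 5 -/
lemma pd_walk (htf : G.CliqueFree 3) (hc5 : C5Connected G) (hk : 1 ≤ k) (hl : 1 ≤ l)
    (x y : V × (Fin k ⊕ Fin l)) : ∃ r : (PP).Walk x y, r.length ≤ 5 := by
  obtain ⟨g, u⟩ := x
  obtain ⟨g', u'⟩ := y
  by_cases hs : u.isLeft = u'.isLeft
  · rcases eq_or_ne g g' with rfl | hg
    · rcases eq_or_ne u u' with rfl | hu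
      · exact ⟨SimpleGraph.Walk.nil, by simp⟩
      · obtain ⟨w, hw⟩ := g_nbr hc5 g
        obtain ⟨q, hq⟩ := cbg_walk_even hk hl hs 2 (by norm_num) (Or.inr le_rfl)
        obtain ⟨r, hr⟩ := aux_zip
          (SimpleGraph.Walk.cons hw (SimpleGraph.Walk.cons hw.symm SimpleGraph.Walk.nil)) q (by simp [hq])
        exact ⟨r, by simp at hr; omega⟩
    · by_cases hadj : G.Adj g g'
      · obtain ⟨w, r3, hgw, hwne, hr3⟩ := g_adj_walk4 htf hc5 hadj
        obtain ⟨q, hq⟩ := cbg_walk_even hk hl hs 4 (by norm_num) (Or.inr (by norm_num))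
        obtain ⟨r, hr⟩ := aux_zip (SimpleGraph.Walk.cons hgw r3) q (by simp [hq, hr3])
        exact ⟨r, by simp [hr3] at hr; omega⟩
      · obtain ⟨⟨m, hm1, hm2⟩, _, _⟩ := g_dist2_data htf hc5 hg hadj
        obtain ⟨q, hq⟩ := cbg_walk_even hk hl hs 2 (by norm_num) (Or.inr le_rfl)
        obtain ⟨r, hr⟩ := aux_zip
          (SimpleGraph.Walk.cons hm1 (SimpleGraph.Walk.cons hm2 SimpleGraph.Walk.nil)) q (by simp [hq])
        exact ⟨r, by simp at hr; omega⟩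
  · rcases eq_or_ne g g' with rfl | hg
    · obtain ⟨p, hp⟩ := g_closed5 hc5 g
      obtain ⟨q, hq⟩ := cbg_walk_odd hk hl hs 5 (by norm_num)
      obtain ⟨r, hr⟩ := aux_zip p q (by omega)
      exact ⟨r, by omega⟩
    · by_cases hadj : G.Adj g g'
      · exact ⟨SimpleGraph.Walk.cons (show (PP).Adj _ _ from ⟨hadj, cbg_adj.mpr hs⟩) SimpleGraph.Walk.nil, by simp⟩
      · obtain ⟨_, _, p, hp⟩ := g_dist2_data htf hc5 hg hadj
        obtain ⟨q, hq⟩ := cbg_walk_odd hk hl hs 3 (by norm_num)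
        obtain ⟨r, hr⟩ := aux_zip p q (by omega)
        exact ⟨r, by omega⟩

/-- distinct vertices on the same side are at distance ≥ 2 -/
lemma pd_ge2 (htf : G.CliqueFree 3) (hc5 : C5Connected G) (hk : 1 ≤ k) (hl : 1 ≤ l)
    {x y : V × (Fin k ⊕ Fin l)} (hne : x ≠ y) (hs : x.2.isLeft = y.2.isLeft) :
    2 ≤ (PP).dist x y := by
  obtain ⟨r, _⟩ := pd_walk htf hc5 hk hl x y
  refine aux_dist_lower r ?_
  intro q
  have hpar : q.length % 2 = 0 := (pd_parity q).mpr hs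
  have h0 : q.length ≠ 0 := fun h0 => hne (SimpleGraph.Walk.eq_of_length_eq_zero h0)
  omega

/-- different sides, first coords non-adjacent : distance ≥ 3 -/
lemma pd_ge3 (htf : G.CliqueFree 3) (hc5 : C5Connected G) (hk : 1 ≤ k) (hl : 1 ≤ l)
    {x y : V × (Fin k ⊕ Fin l)} (hs : x.2.isLeft ≠ y.2.isLeft) (hnadj : ¬ G.Adj x.1 y.1) :
    3 ≤ (PP).dist x y := by
  obtain ⟨r, _⟩ := pd_walk htf hc5 hk hl x y
  refine aux_dist_lower r ?_
  intro q
  have hpar : q.length % 2 = 1 := by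
    have hx := (pd_parity q).not.mpr hs
    omega
  have h1 : q.length ≠ 1 := fun h1 => hnadj (aux_adj_of_walk1 q h1).1
  omega

lemma pd_le5 (htf : G.CliqueFree 3) (hc5 : C5Connected G) (hk : 1 ≤ k) (hl : 1 ≤ l)
    (x y : V × (Fin k ⊕ Fin l)) : (PP).dist x y ≤ 5 := by
  obtain ⟨r, hr⟩ := pd_walk htf hc5 hk hl x y
  exact le_trans (SimpleGraph.dist_le r) hr

end AuxProd
section AuxMMD

open SimpleGraph

variable {V : Type*} {G : SimpleGraph V} {k l : ℕ}

local notation "PP" => DirectProd G (completeBipartiteGraph (Fin k) (Fin l))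

lemma mmd_iff (htf : G.CliqueFree 3) (hc5 : C5Connected G) (hk : 1 ≤ k) (hl : 1 ≤ l)
    {g g' : V} {u u' : Fin k ⊕ Fin l} (hne : (g, u) ≠ (g', u')) :
    MMD (PP) (g, u) (g', u') ↔ g = g' := by
  constructor
  · -- show contrapositive style: if MMD then g = g'
    intro hmmd
    by_contra hgg
    obtain ⟨h1, h2⟩ := hmmd
    by_cases hadj : G.Adj g g'
    · by_cases hs : u.isLeft = u'.isLeft
      · -- dist = 4 but neighbor (g', x) is at distance 5
        obtain ⟨x, hx⟩ := cbg_opp hk hl u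
        have hnb : (PP).Adj (g, u) (g', x) := ⟨hadj, cbg_adj.mpr (Ne.symm hx)⟩
        have hle := h1 (g', x) hnb
        have hd1 : (PP).dist (g', u') (g, u) = 4 := pd4 htf hc5 hk hl hadj.symm hs.symm
        have hd2 : (PP).dist (g', u') (g', x) = 5 := by
          refine pd2 htf hc5 hk hl ?_
          rw [← hs] at *
          exact fun h => hx (h.symm)
        omega
      · -- dist = 1 but neighbor (w, u') is at distance ≥ 2
        obtain ⟨w, r3, hgw, hwne, _⟩ := g_adj_walk4 htf hc5 hadj
        have hnb : (PP).Adj (g, u) (w, u') := ⟨hgw, cbg_adj.mpr hs⟩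
        have hle := h1 (w, u') hnb
        have hd1 : (PP).dist (g', u') (g, u) = 1 := pd3 hadj.symm (Ne.symm hs)
        have hd2 : 2 ≤ (PP).dist (g', u') (w, u') := by
          refine pd_ge2 htf hc5 hk hl ?_ rfl
          intro h
          exact hwne (congrArg Prod.fst h).symm
        omega
    · obtain ⟨⟨m, hm1, hm2⟩, ⟨c, hc1, hc2, hc3⟩, _⟩ := g_dist2_data htf hc5 hgg hadj
      by_cases hs : u.isLeft = u'.isLeft
      · -- dist = 2 but neighbor (c, x) is at distance ≥ 3
        obtain ⟨x, hx⟩ := cbg_opp hk hl u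
        have hnb : (PP).Adj (g, u) (c, x) := ⟨hc1, cbg_adj.mpr (Ne.symm hx)⟩
        have hle := h1 (c, x) hnb
        have hd1 : (PP).dist (g', u') (g, u) = 2 :=
          pd6 htf hc5 hk hl (Ne.symm hgg) (fun h => hadj h.symm) hs.symm
        have hd2 : 3 ≤ (PP).dist (g', u') (c, x) := by
          refine pd_ge3 htf hc5 hk hl ?_ (fun h => hc3 h.symm)
          show u'.isLeft ≠ x.isLeft
          rw [← hs]
          exact Ne.symm hx
        omega
      · -- dist = 3 but neighbor (m, u') is at distance 4
        have hnb : (PP).Adj (g, u) (m, u') := ⟨hm1, cbg_adj.mpr hs⟩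
        have hle := h1 (m, u') hnb
        have hd1 : (PP).dist (g', u') (g, u) = 3 :=
          pd5 htf hc5 hk hl (Ne.symm hgg) (fun h => hadj h.symm) (Ne.symm hs)
        have hd2 : (PP).dist (g', u') (m, u') = 4 := pd4 htf hc5 hk hl hm2.symm rfl
        omega
  · rintro rfl
    have hu : u ≠ u' := fun h => hne (by rw [h])
    have key : ∀ a b : Fin k ⊕ Fin l, a ≠ b → MaxDistant (PP) (g, a) (g, b) := by
      intro a b hab
      intro w hw
      obtain ⟨w1, w2⟩ := w
      obtain ⟨hw1, hw2⟩ := hw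
      by_cases hs : a.isLeft = b.isLeft
      · have hd1 : (PP).dist (g, b) (g, a) = 2 := pd1 hc5 hk hl (Ne.symm hab) hs.symm
        have hd2 : (PP).dist (g, b) (w1, w2) = 1 := by
          refine pd3 hw1 ?_
          show b.isLeft ≠ w2.isLeft
          rw [← hs]
          exact cbg_adj.mp hw2
        omega
      · have hd1 : (PP).dist (g, b) (g, a) = 5 := pd2 htf hc5 hk hl (Ne.symm hs)
        have hd2 := pd_le5 htf hc5 hk hl (g, b) (w1, w2)
        omega
    exact ⟨key u u' hu, key u' u hu.symm⟩

end AuxMMD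
theorem stmt16 [Fintype V] (G : SimpleGraph V) (hn : 2 ≤ Fintype.card V)
    (hnb : ¬ G.Colorable 2) (htf : G.CliqueFree 3) (hc5 : C5Connected G)
    (k l : ℕ) (hk : 1 ≤ k) (hl : 1 ≤ l) (hkl : 2 ≤ max k l) :
    Nonempty (srGraph (DirectProd G (completeBipartiteGraph (Fin k) (Fin l)))
        ≃g CopiesComplete (Fintype.card V) (k + l)) ∧
    (∀ (g g' : V) (u u' : Fin k ⊕ Fin l), (g, u) ≠ (g', u') →
      (MMD (DirectProd G (completeBipartiteGraph (Fin k) (Fin l))) (g, u) (g', u') ↔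
        g = g')) := by
  constructor
  · have hbd : boundary (DirectProd G (completeBipartiteGraph (Fin k) (Fin l))) = Set.univ := by
      ext x
      simp only [Set.mem_univ, iff_true]
      obtain ⟨g, u⟩ := x
      obtain ⟨x', hx'⟩ := cbg_opp hk hl u
      have hne : ((g, u) : V × (Fin k ⊕ Fin l)) ≠ (g, x') := by
        intro h
        exact hx' (congrArg (fun p => p.2.isLeft) h).symm
      exact ⟨(g, x'), ((mmd_iff htf hc5 hk hl hne).mpr rfl).1⟩
    let e0 : ↥(boundary (DirectProd G (completeBipartiteGraph (Fin k) (Fin l)))) ≃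
        (V × (Fin k ⊕ Fin l)) := (Equiv.setCongr hbd).trans (Equiv.Set.univ _)
    let e : ↥(boundary (DirectProd G (completeBipartiteGraph (Fin k) (Fin l)))) ≃
        Fin (Fintype.card V) × Fin (k + l) :=
      e0.trans (Equiv.prodCongr (Fintype.equivFin V) finSumFinEquiv)
    refine ⟨⟨e, ?_⟩⟩
    rintro ⟨⟨ga, ua⟩, hma⟩ ⟨⟨gb, ub⟩, hmb⟩
    show ((Fintype.equivFin V) ga = (Fintype.equivFin V) gb ∧
        finSumFinEquiv ua ≠ finSumFinEquiv ub) ↔ _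
    constructor
    · rintro ⟨h1, h2⟩
      have hg : ga = gb := (Fintype.equivFin V).injective h1
      have hu : ua ≠ ub := fun h => h2 (congrArg finSumFinEquiv h)
      have hne : ((ga, ua) : V × (Fin k ⊕ Fin l)) ≠ (gb, ub) := fun h => hu (congrArg Prod.snd h)
      exact ⟨hne, (mmd_iff htf hc5 hk hl hne).mpr hg⟩
    · rintro ⟨hne, hmmd⟩
      have hne' : ((ga, ua) : V × (Fin k ⊕ Fin l)) ≠ (gb, ub) := hne
      have hg : ga = gb := (mmd_iff htf hc5 hk hl hne').mp hmmd
      have hu : ua ≠ ub := fun h => hne' (by rw [hg, h])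
      exact ⟨congrArg (Fintype.equivFin V) hg, fun h => hu (finSumFinEquiv.injective h)⟩
  · intro g g' u u' hne
    exact mmd_iff htf hc5 hk hl hne
end

section
/- Let G and H be finite connected graphs each with at least two vertices, and let G_{SR+I} (resp. H_{SR+I}) denote the graph on vertex set V(G) (resp. V(H)) in which two vertices are adjacent if and only if they are mutually maximally distant in G (resp. in H). Then for all vertices (u,v), (x,y) of V(G) × V(H): (i) if (u,v) and (x,y) are adjacent in the strong product G_{SR+I} ⊠ H_{SR+I}, then (u,v) and (x,y) are mutually maximally distant in the strong product G ⊠ H; and (ii) if (u,v) and (x,y) are mutually maximally distant in G ⊠ H, then (u,v) and (x,y) are adjacent in the Cartesian sum G_{SR+I} ⊕ H_{SR+I}. That is, G_{SR+I} ⊠ H_{SR+I} is a subgraph of (G ⊠ H)_{SR+I}, which is a subgraph of G_{SR+I} ⊕ H_{SR+I}. -/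
open SimpleGraph

variable {V : Type*}

lemma strongProd_walk_of_walks {α β : Type*} {G : SimpleGraph α} {H : SimpleGraph β}
    {a c : α} {b d : β} (p : G.Walk a c) (q : H.Walk b d) :
    ∃ r : (StrongProd G H).Walk (a, b) (c, d), r.length = max p.length q.length := by
  induction p generalizing b with
  | @nil a =>
    induction q with
    | nil => exact ⟨.nil, by simp⟩
    | @cons b b' d h q ih =>
      obtain ⟨r, hr⟩ := ih
      refine ⟨Walk.cons (v := (a, b')) ⟨by simp [Prod.ext_iff, h.ne], Or.inl rfl, Or.inr h⟩ r, ?_⟩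
      change r.length + 1 = _
      simp [hr]
  | @cons a a' c h p ih =>
    cases q with
    | nil =>
      obtain ⟨r, hr⟩ := ih (b := d) Walk.nil
      refine ⟨Walk.cons (v := (a', d)) ⟨by simp [Prod.ext_iff, h.ne], Or.inr h, Or.inl rfl⟩ r, ?_⟩
      change r.length + 1 = _
      simp [hr]
    | @cons b b' d' h' q =>
      obtain ⟨r, hr⟩ := ih q
      refine ⟨Walk.cons (v := (a', b')) ⟨by simp [Prod.ext_iff, h.ne], Or.inr h, Or.inr h'⟩ r, ?_⟩
      change r.length + 1 = _
      simp only [Walk.length_cons, hr]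
      omega

lemma strongProd_walk_ge {α β : Type*} {G : SimpleGraph α} {H : SimpleGraph β}
    (hG : G.Connected) (hH : H.Connected)
    {x y : α × β} (r : (StrongProd G H).Walk x y) :
    G.dist x.1 y.1 ≤ r.length ∧ H.dist x.2 y.2 ≤ r.length := by
  induction r with
  | nil => simp [SimpleGraph.dist_self]
  | @cons x m y h r ih =>
    obtain ⟨hne, h1, h2⟩ := h
    have e1 : G.dist x.1 m.1 ≤ 1 := by
      rcases h1 with h1 | h1
      · simp [h1, SimpleGraph.dist_self]
      · simp [SimpleGraph.dist_eq_one_iff_adj.2 h1]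
    have e2 : H.dist x.2 m.2 ≤ 1 := by
      rcases h2 with h2 | h2
      · simp [h2, SimpleGraph.dist_self]
      · simp [SimpleGraph.dist_eq_one_iff_adj.2 h2]
    have t1 := hG.dist_triangle (u := x.1) (v := m.1) (w := y.1)
    have t2 := hH.dist_triangle (u := x.2) (v := m.2) (w := y.2)
    change _ ≤ r.length + 1 ∧ _ ≤ r.length + 1
    omega

lemma strongProd_dist {α β : Type*} {G : SimpleGraph α} {H : SimpleGraph β}
    (hG : G.Connected) (hH : H.Connected) (a c : α) (b d : β) :
    (StrongProd G H).dist (a, b) (c, d) = max (G.dist a c) (H.dist b d) := by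
  obtain ⟨p, hp⟩ := hG.exists_walk_length_eq_dist a c
  obtain ⟨q, hq⟩ := hH.exists_walk_length_eq_dist b d
  obtain ⟨r, hr⟩ := strongProd_walk_of_walks p q
  apply le_antisymm
  · calc (StrongProd G H).dist (a, b) (c, d) ≤ r.length := SimpleGraph.dist_le r
      _ = _ := by rw [hr, hp, hq]
  · obtain ⟨s, hs⟩ := r.reachable.exists_walk_length_eq_dist
    have := strongProd_walk_ge hG hH s
    simp only [hs] at this
    omega

lemma key_max_distant {α β : Type*} {G : SimpleGraph α} {H : SimpleGraph β}
    (hG : G.Connected) (hH : H.Connected) {u x : α} {v y : β}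
    (h1 : u = x ∨ (u ≠ x ∧ MMD G u x)) (h2 : v = y ∨ (v ≠ y ∧ MMD H v y))
    (hne : (u, v) ≠ (x, y)) :
    MaxDistant (StrongProd G H) (u, v) (x, y) := by
  rintro ⟨w1, w2⟩ ⟨hwne, ha, hb⟩
  simp only at ha hb
  rw [strongProd_dist hG hH, strongProd_dist hG hH]
  have dA : G.dist x w1 ≤ max (G.dist x u) 1 := by
    rcases ha with rfl | ha
    · exact le_max_left _ _
    · rcases h1 with rfl | ⟨hux, hm, _⟩
      · calc G.dist u w1 = 1 := SimpleGraph.dist_eq_one_iff_adj.2 ha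
          _ ≤ _ := le_max_right _ _
      · exact le_trans (hm w1 ha) (le_max_left _ _)
  have dB : H.dist y w2 ≤ max (H.dist y v) 1 := by
    rcases hb with rfl | hb
    · exact le_max_left _ _
    · rcases h2 with rfl | ⟨hvy, hm, _⟩
      · calc H.dist v w2 = 1 := SimpleGraph.dist_eq_one_iff_adj.2 hb
          _ ≤ _ := le_max_right _ _
      · exact le_trans (hm w2 hb) (le_max_left _ _)
  have pos : 1 ≤ max (G.dist x u) (H.dist y v) := by
    rcases h1 with rfl | ⟨hux, _⟩
    · have : v ≠ y := by rintro rfl; exact hne rfl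
      have := hH.pos_dist_of_ne (Ne.symm this)
      omega
    · have := hG.pos_dist_of_ne (Ne.symm hux)
      omega
  omega

theorem stmt18 {α β : Type*} [Fintype α] [Fintype β]
    (G : SimpleGraph α) (H : SimpleGraph β)
    (hG : G.Connected) (hH : H.Connected)
    (h2G : 2 ≤ Fintype.card α) (h2H : 2 ≤ Fintype.card β) :
    StrongProd (srGraphI G) (srGraphI H) ≤ srGraphI (StrongProd G H) ∧
      srGraphI (StrongProd G H) ≤ CartSum (srGraphI G) (srGraphI H) := by
  constructor
  · rintro ⟨u, v⟩ ⟨x, y⟩ ⟨hne, h1, h2⟩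
    simp only at h1 h2
    refine ⟨hne, ?_, ?_⟩
    · exact key_max_distant hG hH h1 h2 hne
    · apply key_max_distant hG hH
      · exact h1.imp Eq.symm fun ⟨a, b, c⟩ => ⟨a.symm, c, b⟩
      · exact h2.imp Eq.symm fun ⟨a, b, c⟩ => ⟨a.symm, c, b⟩
      · exact hne.symm
  · rintro ⟨u, v⟩ ⟨x, y⟩ ⟨hne, hmd1, hmd2⟩
    dsimp only [CartSum, srGraphI, MMD, MaxDistant]
    by_cases hc : H.dist v y ≤ G.dist u x
    · left
      have hgd : H.dist y v ≤ G.dist x u := by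
        rwa [SimpleGraph.dist_comm, SimpleGraph.dist_comm (u := x)]
      have hux : u ≠ x := by
        rintro rfl
        have h0 : G.dist u u = 0 := SimpleGraph.dist_self
        have : v = y := hH.dist_eq_zero_iff.1 (by omega)
        exact hne (by simp [this])
      refine ⟨hux, ?_, ?_⟩
      · intro w hw
        have := hmd1 (w, v) ⟨by simp [Prod.ext_iff, hw.ne], Or.inr hw, Or.inl rfl⟩
        rw [strongProd_dist hG hH, strongProd_dist hG hH] at this
        omega
      · intro w hw
        have := hmd2 (w, y) ⟨by simp [Prod.ext_iff, hw.ne], Or.inr hw, Or.inl rfl⟩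
        rw [strongProd_dist hG hH, strongProd_dist hG hH] at this
        omega
    · right
      push_neg at hc
      have hgd : G.dist x u ≤ H.dist y v := by
        rw [SimpleGraph.dist_comm, SimpleGraph.dist_comm (u := y)]
        omega
      have hvy : v ≠ y := by
        rintro rfl
        have h0 : H.dist v v = 0 := SimpleGraph.dist_self
        omega
      refine ⟨hvy, ?_, ?_⟩
      · intro w hw
        have := hmd1 (u, w) ⟨by simp [Prod.ext_iff, hw.ne], Or.inl rfl, Or.inr hw⟩
        rw [strongProd_dist hG hH, strongProd_dist hG hH] at this
        omega
      · intro w hw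
        have := hmd2 (x, w) ⟨by simp [Prod.ext_iff, hw.ne], Or.inl rfl, Or.inr hw⟩
        rw [strongProd_dist hG hH, strongProd_dist hG hH] at this
        omega
end
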